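/- arXiv:1506.07699 — 5 statements merged into one kernel-verified Lean document; each statement's English description precedes it below -/
import Mathlib

section
/- Let A₁,…,Aₙ be real symmetric r×r matrices and M = x₀·I_r − (A₁x₁ + ⋯ + Aₙxₙ), a matrix of linear forms in variables x₀,…,xₙ. Let h ∈ ℝ[x₀,…,xₙ] be an irreducible polynomial whose real zero set is Zariski dense in its complex zero set, and let m ≥ 1. If h^m divides det(M), then h divides every (r−m+1)×(r−m+1) minor of M. -/
open MvPolynomial

section Aux

open Polynomial

private lemma charpoly_conj_aux {r : ℕ} (U D V : Matrix (Fin r) (Fin r) ℝ)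
    (hUV : U * V = 1) :
    (U * D * V).charpoly = D.charpoly := by
  classical
  set mm : Matrix (Fin r) (Fin r) ℝ →+* Matrix (Fin r) (Fin r) ℝ[X] :=
    (Polynomial.C : ℝ →+* ℝ[X]).mapMatrix with hmm
  have h1 : mm U * Matrix.scalar (Fin r) Polynomial.X * mm V = Matrix.scalar (Fin r) Polynomial.X := by
    rw [← (Matrix.scalar_commute (Polynomial.X : ℝ[X]) (Commute.all _) (mm U)).eq, mul_assoc,
      ← map_mul, hUV, map_one, mul_one]
  have h2 : mm U * mm D * mm V = mm (U * D * V) := by rw [← map_mul, ← map_mul]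
  have key : Matrix.charmatrix (U * D * V) = mm U * Matrix.charmatrix D * mm V := by
    rw [Matrix.charmatrix, Matrix.charmatrix, Matrix.mul_sub, Matrix.sub_mul, h1, h2]
  have hUV' : mm U * mm V = 1 := by rw [← map_mul, hUV, map_one]
  rw [Matrix.charpoly, Matrix.charpoly, key, Matrix.det_mul, Matrix.det_mul,
    mul_right_comm, ← Matrix.det_mul, hUV', Matrix.det_one, one_mul]

private lemma charpoly_eq_prod {r : ℕ} {B : Matrix (Fin r) (Fin r) ℝ} (hB : B.IsHermitian) :
    B.charpoly = ∏ i, (Polynomial.X - Polynomial.C (hB.eigenvalues i)) := by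
  have hUV : (hB.eigenvectorUnitary : Matrix (Fin r) (Fin r) ℝ) *
      star (hB.eigenvectorUnitary : Matrix (Fin r) (Fin r) ℝ) = 1 :=
    Matrix.mem_unitaryGroup_iff.mp hB.eigenvectorUnitary.2
  calc B.charpoly
      = ((hB.eigenvectorUnitary : Matrix (Fin r) (Fin r) ℝ) *
          Matrix.diagonal (RCLike.ofReal ∘ hB.eigenvalues) *
          star (hB.eigenvectorUnitary : Matrix (Fin r) (Fin r) ℝ)).charpoly := by
        rw [← Unitary.conjStarAlgAut_apply (S := ℝ), ← hB.spectral_theorem]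
    _ = (Matrix.diagonal (RCLike.ofReal ∘ hB.eigenvalues)).charpoly :=
        charpoly_conj_aux _ _ _ hUV
    _ = ∏ i, (Polynomial.X - Polynomial.C (hB.eigenvalues i)) := by
        rw [Matrix.charpoly_of_upperTriangular _ (Matrix.blockTriangular_diagonal _)]
        simp

private lemma rank_submatrix_le' {r s : ℕ} (B : Matrix (Fin r) (Fin r) ℝ)
    (ρ κ : Fin s → Fin r) : (B.submatrix ρ κ).rank ≤ B.rank := by
  classical
  have e1 : B * (1 : Matrix (Fin r) (Fin r) ℝ).submatrix (Equiv.refl (Fin r)) κ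
      = B.submatrix id κ := by
    rw [Matrix.mul_submatrix_one]
    rfl
  have e2 : (1 : Matrix (Fin r) (Fin r) ℝ).submatrix ρ (Equiv.refl (Fin r)) *
      B.submatrix id κ = B.submatrix ρ κ := by
    rw [Matrix.one_submatrix_mul]
    rfl
  calc (B.submatrix ρ κ).rank
      = ((1 : Matrix (Fin r) (Fin r) ℝ).submatrix ρ (Equiv.refl (Fin r)) *
          (B * (1 : Matrix (Fin r) (Fin r) ℝ).submatrix (Equiv.refl (Fin r)) κ)).rank := by
        rw [e1, e2]
    _ ≤ (B * (1 : Matrix (Fin r) (Fin r) ℝ).submatrix (Equiv.refl (Fin r)) κ).rank :=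
        Matrix.rank_mul_le_right _ _
    _ ≤ B.rank := Matrix.rank_mul_le_left _ _

private lemma eval_minor_eq_zero {n r m : ℕ} (A : Fin n → Matrix (Fin r) (Fin r) ℝ)
    (hA : ∀ k, (A k).IsSymm)
    (M : Matrix (Fin r) (Fin r) (MvPolynomial (Fin (n + 1)) ℝ))
    (hM : M = Matrix.of fun i j =>
      (if i = j then (MvPolynomial.X 0 : MvPolynomial (Fin (n + 1)) ℝ) else 0)
        - ∑ k : Fin n, MvPolynomial.C (A k i j) * MvPolynomial.X k.succ)
    (h : MvPolynomial (Fin (n + 1)) ℝ)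
    (hm : 1 ≤ m) (hdvd : h ^ m ∣ M.det)
    (ρ κ : Fin (r - m + 1) → Fin r)
    (a : Fin (n + 1) → ℝ) (ha : MvPolynomial.eval a h = 0) :
    MvPolynomial.eval a (M.submatrix ρ κ).det = 0 := by
  classical
  set S : Matrix (Fin r) (Fin r) ℝ :=
    Matrix.of (fun i j => ∑ k : Fin n, A k i j * a k.succ) with hS
  set T : Matrix (Fin r) (Fin r) ℝ := S - Matrix.scalar (Fin r) (a 0) with hT'
  set φ : MvPolynomial (Fin (n + 1)) ℝ →+* ℝ[X] :=
    (MvPolynomial.eval₂Hom (Polynomial.C : ℝ →+* ℝ[X])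
      (fun i => if i = 0 then Polynomial.X + Polynomial.C (a 0) else Polynomial.C (a i))
      : MvPolynomial (Fin (n + 1)) ℝ →+* ℝ[X]) with hφ
  have hMφ : M.map φ = Matrix.charmatrix T := by
    ext i j
    rw [hM]
    simp only [Matrix.map_apply, Matrix.of_apply, map_sub, map_sum, map_mul,
      MvPolynomial.eval₂Hom_X', MvPolynomial.eval₂Hom_C, hφ, Matrix.charmatrix_apply,
      Matrix.diagonal_apply, hT', Matrix.sub_apply, Matrix.scalar_apply,
      Matrix.diagonal_apply, hS, Matrix.of_apply, map_sub, map_sum, map_mul]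
    by_cases hij : i = j <;>
      simp [hij, Fin.succ_ne_zero, sub_sub_eq_add_sub, map_sum] <;> ring
  have hchar : φ M.det = T.charpoly := by
    rw [RingHom.map_det, RingHom.mapMatrix_apply, hMφ, Matrix.charpoly]
  have hpdvd : (φ h) ^ m ∣ T.charpoly := by
    rw [← hchar, ← map_pow]
    exact map_dvd φ hdvd
  have hcpne : T.charpoly ≠ 0 := (Matrix.charpoly_monic T).ne_zero
  have hφh_ne : φ h ≠ 0 := by
    intro h0
    rw [h0, zero_pow (by omega : m ≠ 0)] at hpdvd
    exact hcpne (zero_dvd_iff.mp hpdvd)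
  have hcomp : (Polynomial.evalRingHom (0 : ℝ)).comp φ = (MvPolynomial.eval a : _ →+* ℝ) := by
    apply MvPolynomial.ringHom_ext
    · intro c; simp [hφ]
    · intro i
      by_cases hi : i = 0 <;> simp [hφ, hi]
  have hp0 : Polynomial.eval 0 (φ h) = 0 := by
    have := congrArg (fun ψ : MvPolynomial (Fin (n + 1)) ℝ →+* ℝ => ψ h) hcomp
    simpa using this.trans ha
  have hXdvd : (Polynomial.X : ℝ[X]) ^ m ∣ T.charpoly := by
    refine dvd_trans (pow_dvd_pow_of_dvd ?_ m) hpdvd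
    rw [Polynomial.X_dvd_iff, Polynomial.coeff_zero_eq_eval_zero]
    exact hp0
  have hTsymm : T.IsHermitian := by
    have hSsymm : ∀ i j, S i j = S j i := by
      intro i j
      simp only [hS, Matrix.of_apply]
      refine Finset.sum_congr rfl fun k _ => ?_
      rw [(hA k).apply]
    rw [Matrix.IsHermitian]
    ext i j
    simp only [Matrix.conjTranspose_apply, star_trivial, hT', Matrix.sub_apply,
      Matrix.scalar_apply, Matrix.diagonal_apply]
    rw [hSsymm j i]
    by_cases hij : i = j <;> simp [hij, eq_comm]
  have heig : T.charpoly = ∏ i, (Polynomial.X - Polynomial.C (hTsymm.eigenvalues i)) := charpoly_eq_prod hTsymm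
  have hmult : m ≤ (Finset.univ.filter (fun i => hTsymm.eigenvalues i = 0)).card := by
    have h1 : m ≤ Polynomial.rootMultiplicity 0 T.charpoly := by
      rw [Polynomial.le_rootMultiplicity_iff hcpne]
      simpa using hXdvd
    rw [← Polynomial.count_roots] at h1
    have h2 : T.charpoly.roots = Finset.univ.val.map hTsymm.eigenvalues := by
      rw [heig]
      have h3 : (∏ i, (Polynomial.X - Polynomial.C (hTsymm.eigenvalues i)))
          = ((Finset.univ.val.map hTsymm.eigenvalues).map (fun c => Polynomial.X - Polynomial.C c)).prod := by
        rw [Multiset.map_map]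
        rfl
      rw [h3, Polynomial.roots_multiset_prod_X_sub_C]
    rw [h2, Multiset.count_map] at h1
    have hfil : Finset.univ.val.filter (fun a => (0 : ℝ) = hTsymm.eigenvalues a)
        = (Finset.univ.filter (fun i => hTsymm.eigenvalues i = 0)).val := by
      rw [Finset.filter_val]
      apply Multiset.filter_congr
      intro x _
      exact eq_comm
    rw [hfil] at h1
    exact h1
  have hrank : T.rank ≤ r - m := by
    rw [hTsymm.rank_eq_card_non_zero_eigs]
    have hcompl : Fintype.card {i // hTsymm.eigenvalues i ≠ 0}
        = r - Fintype.card {i // hTsymm.eigenvalues i = 0} := by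
      have := Fintype.card_subtype_compl (fun i => hTsymm.eigenvalues i = 0)
      simpa using this
    have hcard : m ≤ Fintype.card {i // hTsymm.eigenvalues i = 0} := by
      rw [Fintype.card_subtype]
      exact hmult
    omega
  have hdet0 : (T.submatrix ρ κ).det = 0 := by
    by_contra hne
    have hunit : IsUnit (T.submatrix ρ κ) :=
      (Matrix.isUnit_iff_isUnit_det _).mpr (isUnit_iff_ne_zero.mpr hne)
    have hr1 := Matrix.rank_of_isUnit _ hunit
    have hle := (rank_submatrix_le' T ρ κ).trans hrank
    rw [hr1, Fintype.card_fin] at hle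
    omega
  have hEval : (M.submatrix ρ κ).map (MvPolynomial.eval a) = -(T.submatrix ρ κ) := by
    ext i j
    rw [hM]
    simp only [Matrix.map_apply, Matrix.submatrix_apply, Matrix.of_apply, map_sub, map_sum,
      map_mul, MvPolynomial.eval_C, MvPolynomial.eval_X, Matrix.neg_apply, hT',
      Matrix.sub_apply, Matrix.scalar_apply, Matrix.diagonal_apply, hS, Matrix.of_apply]
    by_cases hij : ρ i = κ j <;> simp [hij] <;> ring
  have hmd := RingHom.map_det (MvPolynomial.eval a : _ →+* ℝ) (M.submatrix ρ κ)
  rw [hmd, RingHom.mapMatrix_apply, hEval, Matrix.det_neg, hdet0, mul_zero]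

end Aux

/-- if `h^m` divides `det M`, every `(r-m+1)×(r-m+1)` minor of `M`
is divisible by `h`. -/
theorem stmt_0 (n r m : ℕ) (A : Fin n → Matrix (Fin r) (Fin r) ℝ)
    (hA : ∀ k, (A k).IsSymm)
    (M : Matrix (Fin r) (Fin r) (MvPolynomial (Fin (n + 1)) ℝ))
    (hM : M = Matrix.of fun i j =>
      (if i = j then (X 0 : MvPolynomial (Fin (n + 1)) ℝ) else 0)
        - ∑ k : Fin n, C (A k i j) * X k.succ)
    (h : MvPolynomial (Fin (n + 1)) ℝ) (hirr : Irreducible h)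
    -- the real zero set of `h` is Zariski dense in its complex zero set:
    (hdense : ∀ z : Fin (n + 1) → ℂ, aeval z h = 0 →
      ∀ q : MvPolynomial (Fin (n + 1)) ℂ,
        (∀ a : Fin (n + 1) → ℝ, eval a h = 0 → eval (fun i => (a i : ℂ)) q = 0) →
        eval z q = 0)
    (hm : 1 ≤ m) (hdvd : h ^ m ∣ M.det) :
    ∀ ρ κ : Fin (r - m + 1) → Fin r, Function.Injective ρ → Function.Injective κ →
      h ∣ (M.submatrix ρ κ).det := by
  intro ρ κ hρ hκ
  classical
  set f := (M.submatrix ρ κ).det with hf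
  have key : ∀ a : Fin (n + 1) → ℝ, eval a h = 0 → eval a f = 0 :=
    fun a ha => eval_minor_eq_zero A hA M hM h hm hdvd ρ κ a ha
  set emb : ℝ →+* ℂ := algebraMap ℝ ℂ with hemb
  set hc := MvPolynomial.map emb h with hhc
  set fc := MvPolynomial.map emb f with hfc
  have hmapeval : ∀ (p : MvPolynomial (Fin (n + 1)) ℝ) (a : Fin (n + 1) → ℝ),
      eval (fun i => (a i : ℂ)) (MvPolynomial.map emb p) = emb (eval a p) := by
    intro p a
    rw [MvPolynomial.eval_map]
    rw [show (MvPolynomial.eval a p) = MvPolynomial.eval₂ (RingHom.id ℝ) a p from rfl]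
    rw [MvPolynomial.eval₂_comp_left emb (RingHom.id ℝ) a p]
    simp [Function.comp_def, hemb, Complex.coe_algebraMap]
  have hvanish : ∀ z : Fin (n + 1) → ℂ, eval z hc = 0 → eval z fc = 0 := by
    intro z hz
    refine hdense z ?_ fc ?_
    · rw [MvPolynomial.aeval_def, ← MvPolynomial.eval_map]
      exact hz
    · intro a ha0
      rw [hfc, hmapeval f a, key a ha0, map_zero]
  have hfc_mem : fc ∈ Ideal.radical (Ideal.span {hc}) := by
    rw [← MvPolynomial.vanishingIdeal_zeroLocus_eq_radical (K := ℂ),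
      MvPolynomial.mem_vanishingIdeal_iff]
    intro x hx
    exact hvanish x (hx hc (Ideal.subset_span rfl))
  obtain ⟨N, hN⟩ := hfc_mem
  rw [Ideal.mem_span_singleton] at hN
  obtain ⟨g, hg⟩ := hN
  have hinj : Function.Injective (MvPolynomial.map emb :
      MvPolynomial (Fin (n + 1)) ℝ → MvPolynomial (Fin (n + 1)) ℂ) :=
    MvPolynomial.map_injective emb emb.injective
  set conj' : MvPolynomial (Fin (n + 1)) ℂ →+* MvPolynomial (Fin (n + 1)) ℂ :=
    (MvPolynomial.map (starRingEnd ℂ : ℂ →+* ℂ) :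
      MvPolynomial (Fin (n + 1)) ℂ →+* MvPolynomial (Fin (n + 1)) ℂ) with hconj'
  have hconj_real : ∀ p : MvPolynomial (Fin (n + 1)) ℝ,
      conj' (MvPolynomial.map emb p) = MvPolynomial.map emb p := by
    intro p
    have hcomp2 : (starRingEnd ℂ).comp emb = emb :=
      RingHom.ext fun x => by simp [hemb, Complex.conj_ofReal]
    rw [hconj', MvPolynomial.map_map, hcomp2]
  have hc_ne : hc ≠ 0 := by
    intro h0
    apply hirr.ne_zero
    apply hinj
    rw [map_zero]
    exact h0
  have hg_conj : g = conj' g := by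
    have h1 := congrArg conj' hg
    rw [map_pow, map_mul, hconj_real, hconj_real] at h1
    have h2 : hc * g = hc * conj' g := by rw [← hg, h1]
    exact mul_left_cancel₀ hc_ne h2
  obtain ⟨g', hg'⟩ : ∃ g' : MvPolynomial (Fin (n + 1)) ℝ, MvPolynomial.map emb g' = g := by
    refine ⟨∑ mo ∈ g.support, monomial mo ((g.coeff mo).re), ?_⟩
    rw [map_sum]
    have hterm : ∀ mo ∈ g.support,
        MvPolynomial.map emb (monomial mo ((g.coeff mo).re)) = monomial mo (g.coeff mo) := by
      intro mo _
      rw [MvPolynomial.map_monomial]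
      congr 1
      have hcoeff : (starRingEnd ℂ) (g.coeff mo) = g.coeff mo := by
        conv_rhs => rw [hg_conj]
        rw [hconj', MvPolynomial.coeff_map]
      exact Complex.conj_eq_iff_re.mp hcoeff
    rw [Finset.sum_congr rfl hterm, MvPolynomial.support_sum_monomial_coeff]
  have hdvd_real : h ∣ f ^ N := by
    refine ⟨g', hinj ?_⟩
    rw [map_pow, map_mul, hg', hg]
  have hprime : Prime h := UniqueFactorizationMonoid.irreducible_iff_prime.mp hirr
  exact hprime.dvd_of_dvd_pow hdvd_real
end

section
/- Let A₁,…,Aₙ be real symmetric r×r matrices and M = x₀·I_r − (A₁x₁ + ⋯ + Aₙxₙ). Let h ∈ ℝ[x₀,…,xₙ] be irreducible with real zero set Zariski dense in its complex zero set. If h^m divides det(M) but h^{m+1} does not (m ≥ 1), then h^{m−1} divides every entry of the adjugate matrix adj(M), and some entry of adj(M) is not divisible by h^m. -/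
open MvPolynomial

section AuxLemmas
open Polynomial Matrix

/-- Descent of divisibility from ℂ[x] to ℝ[x]. -/
lemma dvd_of_map_ofReal_dvd {σ : Type*} {p q : MvPolynomial σ ℝ} (hq : q ≠ 0)
    (hdvd : MvPolynomial.map (algebraMap ℝ ℂ) q ∣ MvPolynomial.map (algebraMap ℝ ℂ) p) :
    q ∣ p := by
  classical
  have hinj : Function.Injective (algebraMap ℝ ℂ) := fun a b hab => by
    simpa using congrArg Complex.re hab
  have hminj : Function.Injective (MvPolynomial.map (algebraMap ℝ ℂ) :
      MvPolynomial σ ℝ → MvPolynomial σ ℂ) := MvPolynomial.map_injective _ hinj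
  obtain ⟨w, hw⟩ := hdvd
  have hconj : ∀ x : MvPolynomial σ ℝ,
      MvPolynomial.map (starRingEnd ℂ) (MvPolynomial.map (algebraMap ℝ ℂ) x)
        = MvPolynomial.map (algebraMap ℝ ℂ) x := by
    intro x
    have hcomp : (starRingEnd ℂ).comp (algebraMap ℝ ℂ) = algebraMap ℝ ℂ := by
      apply RingHom.ext
      intro r
      simp [Complex.conj_ofReal]
    rw [MvPolynomial.map_map, hcomp]
  have hw2 := congrArg (MvPolynomial.map (starRingEnd ℂ)) hw
  rw [_root_.map_mul, hconj, hconj] at hw2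
  have hqC : MvPolynomial.map (algebraMap ℝ ℂ) q ≠ 0 := by
    intro H
    exact hq (hminj (by simpa using H))
  have hwfix : MvPolynomial.map (starRingEnd ℂ) w = w :=
    (mul_left_cancel₀ hqC (hw.symm.trans hw2)).symm
  -- coefficients of w are real
  have hre : ∀ s : σ →₀ ℕ, (w.coeff s).im = 0 := by
    intro s
    have := congrArg (fun x => MvPolynomial.coeff s x) hwfix
    simp only [MvPolynomial.coeff_map] at this
    exact Complex.conj_eq_iff_im.mp this
  set w' : MvPolynomial σ ℝ := w.support.sum fun s => MvPolynomial.monomial s (w.coeff s).re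
    with hw'def
  have hmapw' : MvPolynomial.map (algebraMap ℝ ℂ) w' = w := by
    apply MvPolynomial.ext
    intro s
    rw [MvPolynomial.coeff_map, hw'def]
    rw [MvPolynomial.coeff_sum]
    simp only [MvPolynomial.coeff_monomial]
    rw [Finset.sum_ite_eq' w.support s fun t => (MvPolynomial.coeff t w).re]
    by_cases hs : s ∈ w.support
    · rw [if_pos hs]
      apply Complex.ext <;> simp [hre s]
    · rw [if_neg hs]
      rw [MvPolynomial.notMem_support_iff] at hs
      rw [hs, map_zero]

  refine ⟨w', hminj ?_⟩
  rw [hw, _root_.map_mul, hmapw']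


lemma rootMultiplicity_pow' {p : Polynomial ℝ} (hp : p ≠ 0) (a : ℝ) (k : ℕ) :
    rootMultiplicity a (p ^ k) = k * rootMultiplicity a p := by
  induction k with
  | zero => rw [pow_zero]; simp
  | succ k ih =>
      rw [pow_succ, Polynomial.rootMultiplicity_mul (mul_ne_zero (pow_ne_zero _ hp) hp), ih]
      ring

lemma adj_charmatrix_dvd_of_conj {r : ℕ} (B U : Matrix (Fin r) (Fin r) ℝ) (v : Fin r → ℝ)
    (hU1 : U * star U = 1) (hspec : B = U * Matrix.diagonal v * star U) (α : ℝ) (i j : Fin r) :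
    (Polynomial.X - Polynomial.C α) ^ (rootMultiplicity α B.charpoly - 1)
      ∣ (charmatrix B).adjugate i j := by
  classical
  let f := (Polynomial.C : ℝ →+* Polynomial ℝ).mapMatrix (m := Fin r)
  have hexpand : ∀ P : Matrix (Fin r) (Fin r) ℝ,
      charmatrix P = Matrix.scalar (Fin r) Polynomial.X - f P := fun P => rfl
  have hcomm : ∀ P : Matrix (Fin r) (Fin r) (Polynomial ℝ),
      P * Matrix.scalar (Fin r) Polynomial.X = Matrix.scalar (Fin r) Polynomial.X * P :=
    fun P => (Matrix.scalar_commute Polynomial.X (fun r' => Commute.all _ _) P).symm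
  have hUs : f U * Matrix.scalar (Fin r) Polynomial.X * f (star U)
      = Matrix.scalar (Fin r) Polynomial.X := by
    rw [hcomm (f U), mul_assoc, ← f.map_mul, hU1, f.map_one, mul_one]
  have hcm : charmatrix B = f U * charmatrix (Matrix.diagonal v) * f (star U) := by
    rw [hexpand, hexpand, mul_sub, sub_mul, hUs, hspec, f.map_mul, f.map_mul]
  have hdiag : charmatrix (Matrix.diagonal v)
      = Matrix.diagonal (fun k => Polynomial.X - Polynomial.C (v k)) := by
    ext k l
    by_cases hkl : k = l
    · subst hkl; simp [charmatrix_apply_eq, Matrix.diagonal_apply_eq]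
    · simp [charmatrix_apply_ne _ _ _ hkl, Matrix.diagonal_apply_ne _ hkl]
  set S : Finset (Fin r) := Finset.univ.filter (fun k => v k = α) with hSdef
  have hcpoly : B.charpoly = ∏ k, (Polynomial.X - Polynomial.C (v k)) := by
    show (charmatrix B).det = _
    rw [hcm, Matrix.det_mul, Matrix.det_mul, mul_comm ((f U).det), mul_assoc,
      ← Matrix.det_mul, ← f.map_mul, hU1, f.map_one, Matrix.det_one, mul_one, hdiag,
      Matrix.det_diagonal]
  have hQne : ∀ T : Finset (Fin r), (∀ k ∈ T, v k ≠ α) →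
      ¬ (∏ k ∈ T, (Polynomial.X - Polynomial.C (v k))).IsRoot α := by
    intro T hT
    simp only [Polynomial.IsRoot, Polynomial.eval_prod, Polynomial.eval_sub,
      Polynomial.eval_X, Polynomial.eval_C]
    exact Finset.prod_ne_zero_iff.mpr fun k hk => sub_ne_zero.mpr fun hh => hT k hk hh.symm
  have hcard : rootMultiplicity α B.charpoly = S.card := by
    rw [hcpoly, ← Finset.prod_filter_mul_prod_filter_not Finset.univ (fun k => v k = α)]
    have h1 : ∏ k ∈ Finset.univ.filter (fun k => v k = α), (Polynomial.X - Polynomial.C (v k))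
        = (Polynomial.X - Polynomial.C α) ^ S.card := by
      have hcg : ∀ k ∈ Finset.univ.filter (fun k => v k = α),
          (Polynomial.X - Polynomial.C (v k)) = (Polynomial.X - Polynomial.C α) := fun k hk => by
        rw [(Finset.mem_filter.mp hk).2]
      rw [Finset.prod_congr rfl hcg, Finset.prod_const, hSdef]
    have hne2 : ¬ (∏ k ∈ Finset.univ.filter (fun k => ¬ v k = α),
        (Polynomial.X - Polynomial.C (v k))).IsRoot α :=
      hQne _ (fun k hk => (Finset.mem_filter.mp hk).2)
    rw [h1, Polynomial.rootMultiplicity_mul (mul_ne_zero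
        (pow_ne_zero _ (Polynomial.X_sub_C_ne_zero α))
        (fun h0 => hne2 (by rw [h0]; simp [Polynomial.IsRoot]))),
      Polynomial.rootMultiplicity_X_sub_C_pow, Polynomial.rootMultiplicity_eq_zero hne2, add_zero]
  have hdvd_diag : ∀ k l, (Polynomial.X - Polynomial.C α) ^ (S.card - 1)
      ∣ (charmatrix (Matrix.diagonal v)).adjugate k l := by
    intro k l
    rw [hdiag, Matrix.adjugate_diagonal]
    by_cases hkl : k = l
    · subst hkl
      rw [Matrix.diagonal_apply_eq]
      rw [← Finset.prod_filter_mul_prod_filter_not (Finset.univ.erase k) (fun t => v t = α)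
        (fun t => Polynomial.X - Polynomial.C (v t))]
      have hfe : (Finset.univ.erase k).filter (fun t => v t = α) = S.erase k := by
        ext t
        simp [hSdef, Finset.mem_erase, Finset.mem_filter, and_comm]
      have h1 : ∏ t ∈ (Finset.univ.erase k).filter (fun t => v t = α),
          (Polynomial.X - Polynomial.C (v t))
          = (Polynomial.X - Polynomial.C α) ^ (S.erase k).card := by
        rw [hfe]
        have hcg : ∀ t ∈ S.erase k,
            (Polynomial.X - Polynomial.C (v t)) = (Polynomial.X - Polynomial.C α) := fun t ht => by
          rw [(Finset.mem_filter.mp (Finset.mem_of_mem_erase ht)).2]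
        rw [Finset.prod_congr rfl hcg, Finset.prod_const]
      rw [h1]
      refine dvd_mul_of_dvd_left (pow_dvd_pow _ ?_) _
      by_cases hk : k ∈ S
      · rw [Finset.card_erase_of_mem hk]
      · rw [Finset.erase_eq_of_notMem hk]
        exact Nat.sub_le _ _
    · rw [Matrix.diagonal_apply_ne _ hkl]
      exact dvd_zero _
  have hadj : (charmatrix B).adjugate
      = (f (star U)).adjugate * ((charmatrix (Matrix.diagonal v)).adjugate * (f U).adjugate) := by
    rw [hcm, Matrix.adjugate_mul_distrib, Matrix.adjugate_mul_distrib]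
  rw [hcard, hadj, Matrix.mul_apply]
  apply Finset.dvd_sum
  intro l _
  rw [Matrix.mul_apply, Finset.mul_sum]
  apply Finset.dvd_sum
  intro t _
  exact Dvd.dvd.mul_left ((hdvd_diag l t).mul_right _) _

lemma aeval_cons_eq {n : ℕ} (s : Fin n → ℝ) (f : MvPolynomial (Fin (n + 1)) ℝ) :
    aeval (Fin.cons Polynomial.X (fun k => Polynomial.C (s k)) : Fin (n + 1) → Polynomial ℝ) f
      = Polynomial.map (MvPolynomial.eval s) (finSuccEquiv ℝ n f) := by
  have hhom : ((MvPolynomial.aeval (Fin.cons Polynomial.X (fun k => Polynomial.C (s k)) :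
        Fin (n + 1) → Polynomial ℝ)).toRingHom : MvPolynomial (Fin (n + 1)) ℝ →+* Polynomial ℝ)
      = (Polynomial.mapRingHom (MvPolynomial.eval s)).comp
        ((finSuccEquiv ℝ n).toAlgHom.toRingHom) := by
    apply MvPolynomial.ringHom_ext
    · intro a
      simp [MvPolynomial.finSuccEquiv_apply, Polynomial.algebraMap_eq]
    · intro i
      refine Fin.cases ?_ ?_ i
      · simp [finSuccEquiv_X_zero, Fin.cons_zero]
      · intro k
        simp [finSuccEquiv_X_succ, Fin.cons_succ]
  exact RingHom.congr_fun hhom f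

lemma eval_via_cons {n : ℕ} (a : Fin (n + 1) → ℝ) (f : MvPolynomial (Fin (n + 1)) ℝ) :
    Polynomial.eval (a 0) (MvPolynomial.aeval (Fin.cons Polynomial.X (fun k => Polynomial.C (Fin.tail a k)) :
      Fin (n + 1) → Polynomial ℝ) f) = MvPolynomial.eval a f := by
  rw [aeval_cons_eq]
  have := MvPolynomial.eval_eq_eval_mv_eval' (Fin.tail a) (a 0) f
  rw [Fin.cons_self_tail] at this
  exact this.symm

lemma finSuccEquiv_rename_succ {n : ℕ} (c : MvPolynomial (Fin n) ℝ) :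
    finSuccEquiv ℝ n (rename Fin.succ c) = Polynomial.C c := by
  have hhom : ((finSuccEquiv ℝ n).toAlgHom.toRingHom).comp (rename Fin.succ).toRingHom
      = (Polynomial.C : MvPolynomial (Fin n) ℝ →+* Polynomial (MvPolynomial (Fin n) ℝ)) := by
    apply MvPolynomial.ringHom_ext
    · intro a
      simp [MvPolynomial.finSuccEquiv_apply]
    · intro i
      simp [finSuccEquiv_X_succ]
  exact RingHom.congr_fun hhom c

end AuxLemmas

lemma finSuccEquiv_C' {n : ℕ} (a : ℝ) :
    finSuccEquiv ℝ n (MvPolynomial.C a) = Polynomial.C (MvPolynomial.C a) := by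
  simp [finSuccEquiv_apply]

/-- if `h^m ∥ det M` then `h^(m-1)` divides every entry of `adj M`,
and some entry of `adj M` is not divisible by `h^m`. -/
theorem stmt_3 (n r m : ℕ) (A : Fin n → Matrix (Fin r) (Fin r) ℝ)
    (hA : ∀ k, (A k).IsSymm)
    (M : Matrix (Fin r) (Fin r) (MvPolynomial (Fin (n + 1)) ℝ))
    (hM : M = Matrix.of fun i j =>
      (if i = j then (X 0 : MvPolynomial (Fin (n + 1)) ℝ) else 0)
        - ∑ k : Fin n, C (A k i j) * X k.succ)
    (h : MvPolynomial (Fin (n + 1)) ℝ) (hirr : Irreducible h)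
    (hdense : ∀ z : Fin (n + 1) → ℂ, aeval z h = 0 →
      ∀ q : MvPolynomial (Fin (n + 1)) ℂ,
        (∀ a : Fin (n + 1) → ℝ, eval a h = 0 → eval (fun i => (a i : ℂ)) q = 0) →
        eval z q = 0)
    (hm : 1 ≤ m) (hdvd : h ^ m ∣ M.det) (hndvd : ¬ h ^ (m + 1) ∣ M.det) :
    (∀ i j, h ^ (m - 1) ∣ M.adjugate i j) ∧
      ∃ i j, ¬ h ^ m ∣ M.adjugate i j := by
  classical
  have hh0 : h ≠ 0 := hirr.ne_zero
  have hprime : Prime h := UniqueFactorizationMonoid.irreducible_iff_prime.mp hirr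
  obtain ⟨g, hg⟩ := hdvd
  have hhg : ¬ h ∣ g := by
    rintro ⟨g', hg'⟩
    exact hndvd ⟨g', by rw [hg, hg', pow_succ]; ring⟩
  -- r = 0 is impossible
  rcases Nat.eq_zero_or_pos r with hr0 | hrpos
  · exfalso
    subst hr0
    rw [Matrix.det_isEmpty] at hg
    exact hirr.not_isUnit (isUnit_of_dvd_one
      (dvd_trans (dvd_pow_self h (by omega : m ≠ 0)) ⟨g, hg⟩))
  obtain ⟨r', rfl⟩ : ∃ r'', r = r'' + 1 := ⟨r - 1, by omega⟩
  -- finSuccEquiv data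
  set h' : Polynomial (MvPolynomial (Fin n) ℝ) := finSuccEquiv ℝ n h with hh'def
  set c : MvPolynomial (Fin n) ℝ := h'.leadingCoeff with hcdef
  have hh'0 : h' ≠ 0 := by
    intro H
    apply hh0
    apply (finSuccEquiv ℝ n).injective
    rw [← hh'def, H, map_zero]
  have hc0 : c ≠ 0 := Polynomial.leadingCoeff_ne_zero.mpr hh'0
  -- the matrix N over MvPolynomial (Fin n) ℝ
  set N : Matrix (Fin (r' + 1)) (Fin (r' + 1)) (MvPolynomial (Fin n) ℝ) :=
    Matrix.of (fun i j => ∑ k : Fin n, MvPolynomial.C (A k i j) * X k) with hNdef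
  have hψM : M.map (finSuccEquiv ℝ n) = Matrix.charmatrix N := by
    apply Matrix.ext
    intro i j
    rw [Matrix.map_apply, hM]
    simp only [Matrix.of_apply]
    rw [map_sub (finSuccEquiv ℝ n), map_sum (finSuccEquiv ℝ n), Matrix.charmatrix_apply]
    congr 1
    · rw [Matrix.diagonal_apply]
      split
      · exact finSuccEquiv_X_zero
      · exact map_zero _
    · rw [hNdef]
      simp only [Matrix.of_apply]
      rw [map_sum]
      refine Finset.sum_congr rfl fun k _ => ?_
      rw [map_mul, finSuccEquiv_C', finSuccEquiv_X_succ, ← Polynomial.C_mul]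
  have hψdet : finSuccEquiv ℝ n M.det = N.charpoly := by
    have h1 := AlgHom.map_det ((finSuccEquiv ℝ n).toAlgHom) M
    simp only [AlgEquiv.toAlgHom_eq_coe, AlgHom.coe_coe, AlgHom.mapMatrix_apply] at h1
    change finSuccEquiv ℝ n M.det = (M.map (finSuccEquiv ℝ n)).det at h1
    rw [h1, hψM]
    rfl
  have hmonic := N.charpoly_monic
  have hd1 : 1 ≤ h'.natDegree := by
    by_contra hd
    have hd0 : h'.natDegree = 0 := by omega
    have hdvd' : h' ∣ N.charpoly := by
      rw [← hψdet]
      refine dvd_trans (dvd_pow_self h' (by omega : m ≠ 0)) ?_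
      rw [← map_pow]
      exact map_dvd _ ⟨g, hg⟩
    obtain ⟨Q, hQ⟩ := hdvd'
    have hlc := congrArg Polynomial.leadingCoeff hQ
    rw [Polynomial.leadingCoeff_mul, hmonic.leadingCoeff] at hlc
    have hunit' : IsUnit h' := by
      rw [Polynomial.isUnit_iff]
      exact ⟨h'.leadingCoeff, IsUnit.of_mul_eq_one _ hlc.symm, by
        rw [Polynomial.leadingCoeff, hd0]
        exact (Polynomial.eq_C_of_natDegree_eq_zero hd0).symm⟩
    have hunit : IsUnit h := by
      have := hunit'.map (finSuccEquiv ℝ n).symm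
      rw [hh'def, AlgEquiv.symm_apply_apply] at this
      exact this
    exact hirr.not_isUnit hunit
  have hndc : ¬ h ∣ rename Fin.succ c := by
    intro hdc
    have hdC : h' ∣ Polynomial.C c := by
      rw [← finSuccEquiv_rename_succ, hh'def]
      exact map_dvd _ hdc
    have hle := Polynomial.natDegree_le_of_dvd hdC (by
      intro H
      exact hc0 (by rwa [Polynomial.C_eq_zero] at H))
    rw [Polynomial.natDegree_C] at hle
    omega
  constructor
  · -- PART 1
    intro i j
    suffices hstep : ∀ jj, jj ≤ m - 1 → h ^ jj ∣ M.adjugate i j by exact hstep (m - 1) le_rfl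
    intro jj
    induction jj with
    | zero => intro _; simpa using one_dvd _
    | succ jj ih =>
      intro hjj
      obtain ⟨u, hu⟩ := ih (by omega)
      have hj2 : jj + 2 ≤ m := by omega
      suffices hdu : h ∣ u by
        obtain ⟨u', rfl⟩ := hdu
        exact ⟨u', by rw [hu]; ring⟩
      -- the vanishing statement on real zeros of h
      have hvan : ∀ a : Fin (n + 1) → ℝ, eval a h = 0 →
          eval a (u * rename Fin.succ c) = 0 := by
        intro a ha
        rw [map_mul, eval_rename]
        by_cases hcc : eval (a ∘ Fin.succ) c = 0
        · rw [hcc, mul_zero]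
        suffices hua : eval a u = 0 by rw [hua, zero_mul]
        set φ := (MvPolynomial.aeval
          (Fin.cons Polynomial.X (fun k => Polynomial.C (Fin.tail a k)) :
            Fin (n + 1) → Polynomial ℝ) :
          MvPolynomial (Fin (n + 1)) ℝ →ₐ[ℝ] Polynomial ℝ) with hφdef
        have hφh0 : φ h ≠ 0 := by
          intro H
          rw [hφdef, aeval_cons_eq, ← hh'def] at H
          have hco := congrArg (fun P => Polynomial.coeff P h'.natDegree) H
          simp only [Polynomial.coeff_map, Polynomial.coeff_zero] at hco
          exact hcc hco
        have hroot : (φ h).IsRoot (a 0) := by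
          show Polynomial.eval (a 0) (φ h) = 0
          rw [hφdef, eval_via_cons]
          exact ha
        set μ := Polynomial.rootMultiplicity (a 0) (φ h) with hμdef
        have hμ1 : 1 ≤ μ := (Polynomial.rootMultiplicity_pos hφh0).mpr hroot
        set B : Matrix (Fin (r' + 1)) (Fin (r' + 1)) ℝ := ∑ k, a k.succ • A k with hBdef
        have hφM : M.map φ = Matrix.charmatrix B := by
          apply Matrix.ext
          intro i' j'
          rw [Matrix.map_apply, hM]
          simp only [Matrix.of_apply]
          rw [map_sub φ, map_sum φ, Matrix.charmatrix_apply]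
          congr 1
          · rw [Matrix.diagonal_apply]
            split
            · rw [hφdef]
              show MvPolynomial.aeval _ (X 0) = Polynomial.X
              rw [MvPolynomial.aeval_X]
              exact Fin.cons_zero _ _
            · exact map_zero _
          · rw [hBdef]
            have hB' : (∑ k, a k.succ • A k) i' j' = ∑ k, a k.succ * A k i' j' := by
              rw [Matrix.sum_apply]
              exact Finset.sum_congr rfl fun k _ => rfl
            rw [hB', map_sum]
            refine Finset.sum_congr rfl fun k _ => ?_
            have h1 : φ (MvPolynomial.C (A k i' j')) = Polynomial.C (A k i' j') := by
              rw [hφdef, MvPolynomial.aeval_C]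
              rfl
            have h2 : φ (X k.succ) = Polynomial.C (a k.succ) := by
              rw [hφdef, MvPolynomial.aeval_X]
              exact Fin.cons_succ _ _ _
            rw [map_mul φ, h1, h2, ← Polynomial.C_mul, mul_comm]
        have hφq : φ (M.adjugate i j) = (Matrix.charmatrix B).adjugate i j := by
          have hmapadj := AlgHom.map_adjugate φ M
          simp only [AlgHom.mapMatrix_apply] at hmapadj
          calc φ (M.adjugate i j) = (M.adjugate.map φ) i j := rfl
            _ = (M.map φ).adjugate i j := by rw [hmapadj]
            _ = (Matrix.charmatrix B).adjugate i j := by rw [hφM]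
        have hBH : B.IsHermitian := by
          rw [Matrix.IsHermitian, Matrix.conjTranspose_eq_transpose_of_trivial]
          ext i' j'
          rw [Matrix.transpose_apply, hBdef, Matrix.sum_apply, Matrix.sum_apply]
          refine Finset.sum_congr rfl fun k _ => ?_
          show a k.succ * A k j' i' = a k.succ * A k i' j'
          rw [(hA k).apply i' j']
        have hU1 : (Matrix.IsHermitian.eigenvectorUnitary hBH :
              Matrix (Fin (r' + 1)) (Fin (r' + 1)) ℝ) *
            star (Matrix.IsHermitian.eigenvectorUnitary hBH :
              Matrix (Fin (r' + 1)) (Fin (r' + 1)) ℝ) = 1 :=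
          (Matrix.mem_unitaryGroup_iff).mp (Matrix.IsHermitian.eigenvectorUnitary hBH).2
        have hspecdvd := adj_charmatrix_dvd_of_conj B _ _ hU1 hBH.spectral_theorem (a 0) i j
        set μ₀ := Polynomial.rootMultiplicity (a 0) B.charpoly with hμ₀def
        have hcp0 : B.charpoly ≠ 0 := (Matrix.charpoly_monic B).ne_zero
        have hφdet : φ M.det = B.charpoly := by
          have h1 := AlgHom.map_det φ M
          simp only [AlgHom.mapMatrix_apply] at h1
          rw [h1, hφM]
          rfl
        have hmμ : m * μ ≤ μ₀ := by
          rw [hμ₀def, Polynomial.le_rootMultiplicity_iff hcp0]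
          have hp1 : (Polynomial.X - Polynomial.C (a 0)) ^ (m * μ)
              = ((Polynomial.X - Polynomial.C (a 0)) ^ μ) ^ m := by
            rw [← pow_mul, mul_comm]
          rw [hp1]
          refine dvd_trans (pow_dvd_pow_of_dvd (Polynomial.pow_rootMultiplicity_dvd (φ h) (a 0)) m) ?_
          rw [← hφdet, ← map_pow]
          exact map_dvd _ ⟨g, hg⟩
        have hdvdq : (Polynomial.X - Polynomial.C (a 0)) ^ (μ₀ - 1) ∣ φ (M.adjugate i j) := by
          rw [hφq]
          exact hspecdvd
        by_cases hu0 : φ u = 0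
        · rw [← eval_via_cons a u, ← hφdef, hu0, Polynomial.eval_zero]
        · have hq0 : φ (M.adjugate i j) ≠ 0 := by
            rw [hu, map_mul, map_pow]
            exact mul_ne_zero (pow_ne_zero _ hφh0) hu0
          have hle := (Polynomial.le_rootMultiplicity_iff hq0).mpr hdvdq
          have hsplit : Polynomial.rootMultiplicity (a 0) (φ (M.adjugate i j))
              = jj * μ + Polynomial.rootMultiplicity (a 0) (φ u) := by
            rw [hu, map_mul, map_pow,
              Polynomial.rootMultiplicity_mul (by
                rw [← map_pow, ← map_mul, ← hu]; exact hq0),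
              rootMultiplicity_pow' hφh0]
          set t := Polynomial.rootMultiplicity (a 0) (φ u) with htdef
          have ht1 : 1 ≤ t := by
            have h2μ : (jj + 2) * μ ≤ m * μ := Nat.mul_le_mul_right _ hj2
            rw [add_mul] at h2μ
            rw [hsplit] at hle
            set P := jj * μ with hP
            set Q := m * μ with hQ
            omega
          have hisroot : (φ u).IsRoot (a 0) :=
            (Polynomial.rootMultiplicity_pos hu0).mp (by omega)
          rw [← eval_via_cons a u, ← hφdef]
          exact hisroot
      -- complexify and apply Nullstellensatz
      have hvanC : MvPolynomial.map (algebraMap ℝ ℂ) (u * rename Fin.succ c) ∈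
          MvPolynomial.vanishingIdeal ℂ
            (MvPolynomial.zeroLocus ℂ (Ideal.span {MvPolynomial.map (algebraMap ℝ ℂ) h})) := by
        rw [MvPolynomial.mem_vanishingIdeal_iff]
        intro z hz
        change eval z _ = 0
        have hzh : eval z (MvPolynomial.map (algebraMap ℝ ℂ) h) = 0 :=
          (MvPolynomial.mem_zeroLocus_iff.mp hz) _ (Ideal.subset_span (Set.mem_singleton _))
        have haeval : (aeval z) h = 0 := by
          rw [MvPolynomial.aeval_def, ← MvPolynomial.eval_map]
          exact hzh
        apply hdense z haeval
        intro b hb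
        have h1 := hvan b hb
        rw [MvPolynomial.eval_map]
        have h2 : MvPolynomial.eval₂ (algebraMap ℝ ℂ) (fun i => ((b i : ℝ) : ℂ))
            (u * rename Fin.succ c)
            = algebraMap ℝ ℂ (eval b (u * rename Fin.succ c)) := by
          rw [show (eval b) (u * rename Fin.succ c)
              = MvPolynomial.eval₂ (RingHom.id ℝ) b (u * rename Fin.succ c) from rfl]
          rw [MvPolynomial.eval₂_comp_left (algebraMap ℝ ℂ) (RingHom.id ℝ) b]
          rw [RingHom.comp_id]
          rfl
        rw [h2, h1, map_zero]
      rw [MvPolynomial.vanishingIdeal_zeroLocus_eq_radical] at hvanC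
      obtain ⟨s, hs⟩ := Ideal.mem_radical_iff.mp hvanC
      rw [Ideal.mem_span_singleton] at hs
      have hsdvd : h ∣ (u * rename Fin.succ c) ^ s :=
        dvd_of_map_ofReal_dvd hh0 (by rw [map_pow]; exact hs)
      rcases (hprime.2.2 u (rename Fin.succ c) (hprime.dvd_of_dvd_pow hsdvd)) with hdu | hdc
      · exact hdu
      · exact absurd hdc hndc
  · -- PART 2
    by_contra hcon
    push_neg at hcon
    choose Nm hNm using hcon
    have hmat : M.adjugate = (h ^ m) • Matrix.of (fun i j => Nm i j) := by
      ext i j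
      rw [hNm i j]
      simp [Matrix.smul_apply, smul_eq_mul]
    have hdet := congrArg Matrix.det hmat
    rw [Matrix.det_adjugate, Matrix.det_smul, Fintype.card_fin] at hdet
    rw [hg] at hdet
    simp only [Nat.add_sub_cancel] at hdet
    have hkey : g ^ r' = h ^ m * (Matrix.of (fun i j => Nm i j)).det := by
      have heq : (h ^ m) ^ r' * g ^ r'
          = (h ^ m) ^ r' * (h ^ m * (Matrix.of (fun i j => Nm i j)).det) := by
        calc (h ^ m) ^ r' * g ^ r' = (h ^ m * g) ^ r' := by ring
          _ = (h ^ m) ^ (r' + 1) * (Matrix.of (fun i j => Nm i j)).det := hdet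
          _ = (h ^ m) ^ r' * (h ^ m * (Matrix.of (fun i j => Nm i j)).det) := by ring
      exact mul_left_cancel₀ (pow_ne_zero _ (pow_ne_zero _ hh0)) heq
    have hdvdg : h ∣ g ^ r' := by
      rw [hkey]
      exact Dvd.dvd.mul_right (dvd_pow_self h (by omega : m ≠ 0)) _
    exact hhg (hprime.dvd_of_dvd_pow hdvdg)
end

section
/- Let n > 2^k for a non-negative integer k and let r ≤ 2^k. Then there do not exist nonzero polynomials g₁, g₂ ∈ ℝ[x₁,…,xₙ], each a sum of r squares of polynomials, with (x₁² + ⋯ + xₙ²)·g₁ = g₂. -/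
set_option maxHeartbeats 1000000
set_option synthInstance.maxHeartbeats 400000

section SosDevelopment

open Polynomial

/-- `A` has the property that a sum of squares vanishes only if all terms vanish. -/
def SosAniso (A : Type*) [CommRing A] : Prop :=
  ∀ (m : ℕ) (f : Fin m → A), (∑ i, f i ^ 2) = 0 → ∀ i, f i = 0

lemma sosAniso_real : SosAniso ℝ := by
  intro m f h i
  have h2 : f i ^ 2 = 0 :=
    Finset.sum_eq_zero_iff_of_nonneg (fun j _ => sq_nonneg (f j)) |>.mp h i (Finset.mem_univ i)
  exact pow_eq_zero_iff two_ne_zero |>.mp h2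

lemma sosAniso_mvPoly (n : ℕ) : SosAniso (MvPolynomial (Fin n) ℝ) := by
  intro m f h i
  by_contra hf
  obtain ⟨x, hx⟩ : ∃ x : Fin n → ℝ, MvPolynomial.eval x (f i) ≠ 0 := by
    by_contra hall
    push_neg at hall
    exact hf (MvPolynomial.funext (fun x => by simp [hall x]))
  have h2 : ∑ j, (MvPolynomial.eval x (f j)) ^ 2 = 0 := by
    have := congrArg (MvPolynomial.eval x) h
    simpa using this
  exact hx (sosAniso_real m (fun j => MvPolynomial.eval x (f j)) h2 i)

/-- coefficient of a sum of squares at the doubled top degree -/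
lemma coeff_sum_sq {F : Type*} [CommRing F] {m : ℕ} (f : Fin m → F[X]) (D : ℕ)
    (h : ∀ i, (f i).natDegree ≤ D) :
    (∑ i, f i ^ 2).coeff (2 * D) = ∑ i, (f i).coeff D ^ 2 := by
  rw [finset_sum_coeff]
  exact Finset.sum_congr rfl fun i _ => coeff_pow_of_natDegree_le (h i)

lemma sosAniso_poly {F : Type*} [Field F] (hF : SosAniso F) : SosAniso F[X] := by
  intro m f h
  by_contra hf
  push_neg at hf
  obtain ⟨i₀, hi₀⟩ := hf
  set D := Finset.univ.sup (fun i => (f i).natDegree) with hD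
  have hle : ∀ i, (f i).natDegree ≤ D := fun i => hD ▸ Finset.le_sup (f := fun i => (f i).natDegree) (Finset.mem_univ i)
  have hc : ∀ i, (f i).coeff D = 0 := by
    have h2 : (∑ i, f i ^ 2).coeff (2 * D) = ∑ i, (f i).coeff D ^ 2 := coeff_sum_sq f D hle
    rw [h] at h2
    simp only [coeff_zero] at h2
    exact hF m (fun i => (f i).coeff D) h2.symm
  have hne : (Finset.univ : Finset (Fin m)).Nonempty := ⟨i₀, Finset.mem_univ i₀⟩
  obtain ⟨i₁, -, hi₁⟩ := Finset.exists_mem_eq_sup Finset.univ hne (fun i => (f i).natDegree)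
  have hfz : f i₁ = 0 := by
    by_contra hne
    have : (f i₁).coeff D ≠ 0 := by
      rw [hD, hi₁]
      exact leadingCoeff_ne_zero.mpr hne
    exact this (hc i₁)
  have hD0 : D = 0 := by rw [hD, hi₁, hfz]; simp
  apply hi₀
  have : (f i₀).natDegree ≤ 0 := hD0 ▸ hle i₀
  rw [eq_C_of_natDegree_le_zero this]
  have := hc i₀
  rw [hD0] at this
  rw [this, map_zero]

lemma sosAniso_fractionRing {A K : Type*} [CommRing A] [IsDomain A] [Field K] [Algebra A K]
    [IsFractionRing A K] (hA : SosAniso A) : SosAniso K := by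
  intro m f h i
  obtain ⟨b, hb⟩ := IsLocalization.exist_integer_multiples_of_finite (nonZeroDivisors A) f
  choose c hc using fun j => hb j
  have hbz : algebraMap A K b ≠ 0 :=
    IsFractionRing.to_map_ne_zero_of_mem_nonZeroDivisors b.2
  have hkey : ∑ j, c j ^ 2 = 0 := by
    apply IsFractionRing.injective A K
    rw [map_sum, map_zero]
    have : ∑ j, (algebraMap A K) (c j) ^ 2 = (algebraMap A K b) ^ 2 * ∑ j, f j ^ 2 := by
      rw [Finset.mul_sum]
      refine Finset.sum_congr rfl fun j _ => ?_
      rw [hc j, Algebra.smul_def]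
      ring
    simp only [map_pow]
    rw [this, h, mul_zero]
  have := hA m c hkey i
  have h2 : (algebraMap A K b) * f i = 0 := by
    rw [← Algebra.smul_def, ← hc i, this, map_zero]
  rcases mul_eq_zero.mp h2 with h3 | h3
  · exact absurd h3 hbz
  · exact h3

section MatrixPart

open Matrix

variable {F : Type*} [Field F]

lemma self_mul_transpose {n : Type*} [Fintype n] [DecidableEq n]
    {S : Matrix n n F} {s : F} (hs : s ≠ 0) (h : Sᵀ * S = s • 1) : S * Sᵀ = s • 1 := by
  have h1 : (s⁻¹ • Sᵀ) * S = 1 := by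
    rw [smul_mul_assoc, h, smul_smul, inv_mul_cancel₀ hs, one_smul]
  have h2 : S * (s⁻¹ • Sᵀ) = 1 := mul_eq_one_comm.mp h1
  calc S * Sᵀ = s • (S * (s⁻¹ • Sᵀ)) := by
        rw [mul_smul_comm, smul_smul, mul_inv_cancel₀ hs, one_smul]
    _ = s • 1 := by rw [h2]

lemma pfister_block {ι : Type*} [Fintype ι] [DecidableEq ι]
    {S T : Matrix ι ι F} {s t : F} (hs : s ≠ 0) (ht : t ≠ 0)
    (hS : Sᵀ * S = s • 1) (hT : Tᵀ * T = t • 1) :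
    ∃ B : Matrix (ι ⊕ ι) (ι ⊕ ι) F, Bᵀ * B = (s + t) • 1 := by
  refine ⟨Matrix.fromBlocks S T T (-(t⁻¹ • (T * Sᵀ * T))), ?_⟩
  rw [Matrix.fromBlocks_transpose, Matrix.fromBlocks_multiply]
  have hSS : S * Sᵀ = s • 1 := self_mul_transpose hs hS
  have e11 : Sᵀ * S + Tᵀ * T = (s + t) • 1 := by rw [hS, hT, add_smul]
  have e12 : Sᵀ * T + Tᵀ * -(t⁻¹ • (T * Sᵀ * T)) = 0 := by
    rw [Matrix.mul_neg, mul_smul_comm]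
    have : Tᵀ * (T * Sᵀ * T) = t • (Sᵀ * T) := by
      rw [show T * Sᵀ * T = T * (Sᵀ * T) by rw [Matrix.mul_assoc], ← Matrix.mul_assoc, hT,
        smul_mul_assoc, Matrix.one_mul]
    rw [this, smul_smul, inv_mul_cancel₀ ht, one_smul, add_neg_cancel]
  have e21 : Tᵀ * S + (-(t⁻¹ • (T * Sᵀ * T)))ᵀ * T = 0 := by
    rw [Matrix.transpose_neg, Matrix.transpose_smul, Matrix.neg_mul, smul_mul_assoc]
    have h0 : (T * Sᵀ * T)ᵀ = Tᵀ * S * Tᵀ := by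
      rw [Matrix.transpose_mul, Matrix.transpose_mul, Matrix.transpose_transpose,
        Matrix.mul_assoc]
    have : (T * Sᵀ * T)ᵀ * T = t • (Tᵀ * S) := by
      rw [h0, Matrix.mul_assoc, Matrix.mul_assoc, hT, ← Matrix.mul_assoc,
        mul_smul_comm, Matrix.mul_one]
    rw [this, smul_smul, inv_mul_cancel₀ ht, one_smul, add_neg_cancel]
  have e22 : Tᵀ * T + (-(t⁻¹ • (T * Sᵀ * T)))ᵀ * -(t⁻¹ • (T * Sᵀ * T)) = (s + t) • 1 := by
    rw [Matrix.transpose_neg, Matrix.transpose_smul, Matrix.neg_mul, Matrix.mul_neg, neg_neg,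
      smul_mul_assoc, mul_smul_comm, smul_smul]
    have h0 : (T * Sᵀ * T)ᵀ = Tᵀ * S * Tᵀ := by
      rw [Matrix.transpose_mul, Matrix.transpose_mul, Matrix.transpose_transpose,
        Matrix.mul_assoc]
    have h1 : (T * Sᵀ * T)ᵀ * (T * Sᵀ * T) = (t * s * t) • (1 : Matrix ι ι F) := by
      rw [h0]
      calc Tᵀ * S * Tᵀ * (T * Sᵀ * T) = Tᵀ * S * (Tᵀ * T) * (Sᵀ * T) := by
            simp only [Matrix.mul_assoc]
        _ = Tᵀ * S * (t • 1) * (Sᵀ * T) := by rw [hT]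
        _ = t • (Tᵀ * (S * Sᵀ) * T) := by
            rw [mul_smul_comm, Matrix.mul_one, smul_mul_assoc]
            simp only [Matrix.mul_assoc]
        _ = t • (Tᵀ * (s • 1) * T) := by rw [hSS]
        _ = (t * s) • (Tᵀ * T) := by
            rw [mul_smul_comm, Matrix.mul_one]
            rw [smul_mul_assoc, smul_smul]
        _ = (t * s) • (t • (1 : Matrix ι ι F)) := by rw [hT]
        _ = (t * s * t) • 1 := by rw [smul_smul]
    rw [h1, hT, smul_smul]
    rw [← add_smul]
    congr 1
    field_simp
    ring
  rw [e11, e12, e21, e22]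
  rw [← Matrix.fromBlocks_one, Matrix.fromBlocks_smul]
  simp

lemma pfister_matrix : ∀ (k : ℕ) (c : F), c ≠ 0 →
    (∃ u : Fin (2 ^ k) → F, c = ∑ i, u i ^ 2) →
    ∃ A : Matrix (Fin (2 ^ k)) (Fin (2 ^ k)) F, Aᵀ * A = c • 1 := by
  intro k
  induction k with
  | zero =>
    intro c _ ⟨u, hu⟩
    refine ⟨u 0 • 1, ?_⟩
    rw [Matrix.transpose_smul, Matrix.transpose_one, smul_mul_assoc, mul_smul_comm,
      Matrix.mul_one, smul_smul]
    rw [hu]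
    simp [sq]
  | succ k ih =>
    intro c hc ⟨u, hu⟩
    have hpow : 2 ^ k + 2 ^ k = 2 ^ (k + 1) := by ring
    let e : Fin (2 ^ k) ⊕ Fin (2 ^ k) ≃ Fin (2 ^ (k + 1)) :=
      finSumFinEquiv.trans (finCongr hpow)
    set s : F := ∑ i : Fin (2 ^ k), u (e (Sum.inl i)) ^ 2 with hs
    set t : F := ∑ i : Fin (2 ^ k), u (e (Sum.inr i)) ^ 2 with ht
    have hst : c = s + t := by
      rw [hu, ← Equiv.sum_comp e (fun j => u j ^ 2), Fintype.sum_sum_type]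
    -- helper to transport a block matrix along `e`
    have transport : (∃ B : Matrix (Fin (2^k) ⊕ Fin (2^k)) (Fin (2^k) ⊕ Fin (2^k)) F,
        Bᵀ * B = c • 1) → ∃ A : Matrix (Fin (2 ^ (k+1))) (Fin (2 ^ (k+1))) F, Aᵀ * A = c • 1 := by
      rintro ⟨B, hB⟩
      refine ⟨B.submatrix e.symm e.symm, ?_⟩
      rw [Matrix.transpose_submatrix, Matrix.submatrix_mul_equiv, hB]
      have : (c • (1 : Matrix (Fin (2^k) ⊕ Fin (2^k)) (Fin (2^k) ⊕ Fin (2^k)) F)).submatrix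
          e.symm e.symm = c • ((1 : Matrix (Fin (2^k) ⊕ Fin (2^k)) _ F).submatrix e.symm e.symm) :=
        rfl
      rw [this, Matrix.submatrix_one_equiv]
    by_cases hs0 : s = 0
    · have htc : t = c := by rw [hst, hs0, zero_add]
      obtain ⟨T, hT⟩ := ih c hc ⟨fun i => u (e (Sum.inr i)), by rw [← ht, htc]⟩
      exact transport ⟨Matrix.fromBlocks T 0 0 T, by
        rw [Matrix.fromBlocks_transpose, Matrix.fromBlocks_multiply]
        simp only [Matrix.transpose_zero, Matrix.mul_zero, Matrix.zero_mul, add_zero, zero_add,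
          hT]
        rw [← Matrix.fromBlocks_one, Matrix.fromBlocks_smul]
        simp⟩
    by_cases ht0 : t = 0
    · have hsc : s = c := by rw [hst, ht0, add_zero]
      obtain ⟨T, hT⟩ := ih c hc ⟨fun i => u (e (Sum.inl i)), by rw [← hs, hsc]⟩
      exact transport ⟨Matrix.fromBlocks T 0 0 T, by
        rw [Matrix.fromBlocks_transpose, Matrix.fromBlocks_multiply]
        simp only [Matrix.transpose_zero, Matrix.mul_zero, Matrix.zero_mul, add_zero, zero_add,
          hT]
        rw [← Matrix.fromBlocks_one, Matrix.fromBlocks_smul]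
        simp⟩
    · obtain ⟨S, hS⟩ := ih s hs0 ⟨fun i => u (e (Sum.inl i)), hs⟩
      obtain ⟨T, hT⟩ := ih t ht0 ⟨fun i => u (e (Sum.inr i)), ht⟩
      obtain ⟨B, hB⟩ := pfister_block hs0 ht0 hS hT
      exact transport ⟨B, by rw [hB, hst]⟩

lemma sos_mul {N : ℕ} {c d : F} (hc : ∃ u : Fin N → F, c = ∑ i, u i ^ 2)
    (hd : ∃ v : Fin N → F, d = ∑ i, v i ^ 2) (hN : ∃ k, N = 2 ^ k) :
    ∃ w : Fin N → F, c * d = ∑ i, w i ^ 2 := by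
  obtain ⟨k, rfl⟩ := hN
  by_cases hc0 : c = 0
  · exact ⟨0, by simp [hc0]⟩
  obtain ⟨A, hA⟩ := pfister_matrix k c hc0 hc
  obtain ⟨v, rfl⟩ := hd
  refine ⟨fun i => (A.mulVec v) i, ?_⟩
  have h1 : ∑ i, (A.mulVec v) i ^ 2 = (A.mulVec v) ⬝ᵥ (A.mulVec v) := by
    simp [dotProduct, sq]
  rw [h1, Matrix.dotProduct_mulVec, ← Matrix.mulVec_transpose, Matrix.mulVec_mulVec, hA,
    Matrix.smul_mulVec, Matrix.one_mulVec, smul_dotProduct]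
  rw [smul_eq_mul]
  congr 1
  simp [dotProduct, sq]

end MatrixPart

lemma key_identity {R : Type*} [CommRing R] (p g Q σ ρ : R)
    (E : p * g ^ 2 = g ^ 2 * Q + 2 * g * σ + ρ) :
    p * (p * g - g * Q - 2 * σ) ^ 2 =
      (p * g - g * Q - 2 * σ) ^ 2 * Q + 2 * ((p * g - g * Q - 2 * σ) * (Q - p)) * σ +
        (Q - p) ^ 2 * ρ := by
  linear_combination (p - Q) ^ 2 * E

lemma sum_sq_expand {R : Type*} [CommRing R] {m : ℕ} (g : R[X]) (q r : Fin m → R[X]) :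
    ∑ i, (g * q i + r i) ^ 2 =
      g ^ 2 * (∑ i, q i ^ 2) + 2 * g * (∑ i, q i * r i) + ∑ i, r i ^ 2 := by
  rw [Finset.mul_sum, Finset.mul_sum, ← Finset.sum_add_distrib, ← Finset.sum_add_distrib]
  exact Finset.sum_congr rfl fun i _ => by ring

lemma cassels_descent {F : Type*} [Field F] (hFP : SosAniso F[X]) (p : F[X]) (m : ℕ) :
    ∀ (N : ℕ) (g : F[X]) (f : Fin m → F[X]), g ≠ 0 → g.natDegree ≤ N →
      p * g ^ 2 = ∑ i, f i ^ 2 → ∃ w : Fin m → F[X], p = ∑ i, w i ^ 2 := by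
  intro N
  induction N with
  | zero =>
    intro g f hg hN hyp
    have hg0 : g = C (g.coeff 0) := eq_C_of_natDegree_le_zero hN
    set c : F := g.coeff 0 with hc
    have hcne : c ≠ 0 := fun h => hg (by rw [hg0, h, C_0])
    have hcc : C c * C c⁻¹ = 1 := by rw [← C_mul, mul_inv_cancel₀ hcne, C_1]
    refine ⟨fun i => C c⁻¹ * f i, ?_⟩
    have h2 := congrArg (· * (C c⁻¹) ^ 2) hyp
    calc p = p * (C c * C c⁻¹) ^ 2 := by rw [hcc, one_pow, mul_one]
      _ = p * g ^ 2 * (C c⁻¹) ^ 2 := by rw [hg0]; ring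
      _ = (∑ i, f i ^ 2) * (C c⁻¹) ^ 2 := h2
      _ = ∑ i, (C c⁻¹ * f i) ^ 2 := by
          rw [Finset.sum_mul]
          exact Finset.sum_congr rfl fun i _ => by ring
  | succ N ih =>
    intro g f hg hN hyp
    by_cases hNle : g.natDegree ≤ N
    · exact ih g f hg hNle hyp
    have hdeg : g.natDegree = N + 1 := le_antisymm hN (by omega)
    -- make g monic
    set u : F := g.leadingCoeff⁻¹ with hu
    have hlc : g.leadingCoeff ≠ 0 := leadingCoeff_ne_zero.mpr hg
    have hune : u ≠ 0 := inv_ne_zero hlc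
    set g' : F[X] := g * C u with hg'
    have hmonic : g'.Monic := monic_mul_leadingCoeff_inv hg
    have hg'ne : g' ≠ 0 := hmonic.ne_zero
    have hdeg' : g'.natDegree = N + 1 := by
      rw [hg', natDegree_mul hg (fun h => hune (by rwa [← C_0, C_inj] at h)), natDegree_C, add_zero,
        hdeg]
    have hyp' : p * g' ^ 2 = ∑ i, (C u * f i) ^ 2 := by
      have : ∑ i, (C u * f i) ^ 2 = (C u) ^ 2 * ∑ i, f i ^ 2 := by
        rw [Finset.mul_sum]; exact Finset.sum_congr rfl fun i _ => by ring
      rw [this, ← hyp, hg']; ring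
    set f' : Fin m → F[X] := fun i => C u * f i with hf'
    set q : Fin m → F[X] := fun i => f' i /ₘ g' with hq
    set r : Fin m → F[X] := fun i => f' i %ₘ g' with hr
    have hdivmod : ∀ i, g' * q i + r i = f' i := by
      intro i
      have := modByMonic_add_div (f' i) g'
      rw [← this]; ring
    have hrdeg : ∀ i, (r i).degree < g'.degree := fun i => degree_modByMonic_lt (f' i) hmonic
    set Q : F[X] := ∑ i, q i ^ 2 with hQ
    set σ : F[X] := ∑ i, q i * r i with hσ
    set ρ : F[X] := ∑ i, r i ^ 2 with hρ
    have E : p * g' ^ 2 = g' ^ 2 * Q + 2 * g' * σ + ρ := by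
      rw [hyp']
      have : ∀ i, C u * f i = g' * q i + r i := fun i => (hdivmod i).symm
      calc ∑ i, (C u * f i) ^ 2 = ∑ i, (g' * q i + r i) ^ 2 :=
            Finset.sum_congr rfl fun i _ => by rw [this i]
        _ = _ := sum_sq_expand g' q r
    by_cases hρ0 : ρ = 0
    · -- all remainders vanish
      have hrz : ∀ i, r i = 0 := hFP m r hρ0
      refine ⟨q, ?_⟩
      have hE2 : p * g' ^ 2 = g' ^ 2 * Q := by
        rw [E, hρ0]
        have hσ0 : σ = 0 := by
          rw [hσ]
          exact Finset.sum_eq_zero fun i _ => by rw [hrz i, mul_zero]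
        rw [hσ0]; ring
      have h3 : p * g' ^ 2 = Q * g' ^ 2 := by rw [hE2]; ring
      have hpQ : p = Q := mul_right_cancel₀ (pow_ne_zero 2 hg'ne) h3
      rw [hpQ, hQ]
    · -- descent step
      set h : F[X] := p * g' - g' * Q - 2 * σ with hh
      have hgh : g' * h = ρ := by rw [hh]; linear_combination E
      have hhne : h ≠ 0 := fun h0 => hρ0 (by rw [← hgh, h0, mul_zero])
      have hrhodeg : ρ.natDegree ≤ 2 * N := by
        rw [hρ]
        refine natDegree_sum_le_of_forall_le _ _ fun i _ => ?_
        refine (natDegree_pow_le).trans ?_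
        have : (r i).natDegree ≤ N := by
          rcases eq_or_ne (r i) 0 with h0 | h0
          · rw [h0, natDegree_zero]; omega
          · have h4 := natDegree_lt_natDegree h0 (hrdeg i)
            rw [hdeg'] at h4
            omega
        omega
      have hhdeg : h.natDegree ≤ N := by
        have := natDegree_mul hg'ne hhne
        rw [hgh] at this
        omega
      have hyp2 : p * h ^ 2 = ∑ i, (q i * h + r i * (Q - p)) ^ 2 := by
        have expand : ∑ i, (q i * h + r i * (Q - p)) ^ 2 =
            h ^ 2 * Q + 2 * (h * (Q - p)) * σ + (Q - p) ^ 2 * ρ := by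
          rw [hQ, hσ, hρ, Finset.mul_sum, Finset.mul_sum, Finset.mul_sum,
            ← Finset.sum_add_distrib, ← Finset.sum_add_distrib]
          exact Finset.sum_congr rfl fun i _ => by ring
        rw [expand, hh]
        exact key_identity p g' Q σ ρ E
      exact ih h _ hhne hhdeg hyp2

/-- Cassels' theorem: a polynomial that is a sum of `m` squares of rational functions
is a sum of `m` squares of polynomials. -/
lemma cassels {F : Type*} [Field F] (hFP : SosAniso F[X]) (p : F[X]) (m : ℕ)
    (f : Fin m → RatFunc F) (hp : algebraMap F[X] (RatFunc F) p = ∑ i, f i ^ 2) :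
    ∃ w : Fin m → F[X], p = ∑ i, w i ^ 2 := by
  obtain ⟨b, hb⟩ := IsLocalization.exist_integer_multiples_of_finite (nonZeroDivisors F[X]) f
  choose c hc using fun j => hb j
  have hbne : (b : F[X]) ≠ 0 := nonZeroDivisors.ne_zero b.2
  have key : p * (b : F[X]) ^ 2 = ∑ i, c i ^ 2 := by
    apply RatFunc.algebraMap_injective F
    rw [map_mul, map_pow, map_sum, hp, Finset.sum_mul]
    refine Finset.sum_congr rfl fun i _ => ?_
    rw [map_pow, hc i, Algebra.smul_def]
    ring
  exact cassels_descent hFP p m ((b : F[X]).natDegree) b c hbne le_rfl key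

lemma two_ne_zero_of_aniso {F : Type*} [Field F] (hF : SosAniso F) : (2 : F) ≠ 0 := by
  intro h2
  have : ∑ i : Fin 2, (1 : F) ^ 2 = 0 := by
    simp only [one_pow, Fin.sum_const]
    simpa using h2
  exact one_ne_zero (hF 2 (fun _ => 1) this 0)

/-- In a sum-of-squares representation of `X² + C d`, each polynomial has degree ≤ 1. -/
lemma sum_sq_natDegree_le_one {F : Type*} [Field F] (hF : SosAniso F) {m : ℕ}
    (d : F) (g : Fin m → F[X]) (hg : ∑ i, g i ^ 2 = X ^ 2 + C d) :
    ∀ i, (g i).natDegree ≤ 1 := by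
  by_contra hcon
  push_neg at hcon
  obtain ⟨i₀, hi₀⟩ := hcon
  set D := Finset.univ.sup (fun i => (g i).natDegree) with hD
  have hle : ∀ i, (g i).natDegree ≤ D :=
    fun i => hD ▸ Finset.le_sup (f := fun i => (g i).natDegree) (Finset.mem_univ i)
  have hD2 : 2 ≤ D := le_trans hi₀ (hle i₀)
  have hzero : (X ^ 2 + C d : F[X]).coeff (2 * D) = 0 := by
    rw [coeff_add, coeff_X_pow, coeff_C]
    have h1 : 2 * D ≠ 2 := by omega
    have h2 : 2 * D ≠ 0 := by omega
    simp [h1, h2]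
  have hc : ∀ i, (g i).coeff D = 0 := by
    have h3 := coeff_sum_sq g D hle
    rw [hg, hzero] at h3
    exact hF m (fun i => (g i).coeff D) h3.symm
  have hne : (Finset.univ : Finset (Fin m)).Nonempty := ⟨i₀, Finset.mem_univ i₀⟩
  obtain ⟨i₁, -, hi₁⟩ := Finset.exists_mem_eq_sup Finset.univ hne (fun i => (g i).natDegree)
  have hgne : g i₁ ≠ 0 := by
    intro h0
    rw [hD, hi₁, h0, natDegree_zero] at hD2
    omega
  have : (g i₁).coeff D ≠ 0 := by
    rw [hD, hi₁]
    exact leadingCoeff_ne_zero.mpr hgne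
  exact this (hc i₁)

/-- Extract the coefficient equations from a sum-of-squares representation of `X² + C d`. -/
lemma sum_sq_coeffs {F : Type*} [Field F] (hF : SosAniso F) {m : ℕ}
    (d : F) (g : Fin m → F[X]) (hg : ∑ i, g i ^ 2 = X ^ 2 + C d) :
    (∑ i, (g i).coeff 1 ^ 2 = 1) ∧ (∑ i, (g i).coeff 1 * (g i).coeff 0 = 0) ∧
      (∑ i, (g i).coeff 0 ^ 2 = d) := by
  have hdeg := sum_sq_natDegree_le_one hF d g hg
  set a : Fin m → F := fun i => (g i).coeff 1 with ha
  set b : Fin m → F := fun i => (g i).coeff 0 with hb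
  have hgi : ∀ i, g i = C (a i) * X + C (b i) :=
    fun i => eq_X_add_C_of_natDegree_le_one (hdeg i)
  have hsq : ∀ i, g i ^ 2 = C (a i ^ 2) * X ^ 2 + C (2 * (a i * b i)) * X + C (b i ^ 2) := by
    intro i
    rw [hgi i]
    simp only [map_mul, map_pow, map_ofNat]
    ring
  have key : ∀ n, ∑ i, (g i ^ 2).coeff n = (X ^ 2 + C d : F[X]).coeff n := fun n => by
    rw [← finset_sum_coeff, hg]
  have e2 : ∀ i, (g i ^ 2).coeff 2 = a i ^ 2 := fun i => by
    rw [hsq i]; simp [← map_pow, coeff_C_mul, coeff_X_pow, coeff_C]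
  have e1 : ∀ i, (g i ^ 2).coeff 1 = 2 * (a i * b i) := fun i => by
    rw [hsq i]; simp [← map_pow, coeff_C_mul, coeff_X_pow, coeff_C]
  have e0 : ∀ i, (g i ^ 2).coeff 0 = b i ^ 2 := fun i => by
    rw [hsq i]; simp [← map_pow, coeff_C_mul, coeff_X_pow, coeff_C]
  have h2 := key 2
  have h1 := key 1
  have h0 := key 0
  rw [Finset.sum_congr rfl fun i _ => e2 i] at h2
  rw [Finset.sum_congr rfl fun i _ => e1 i] at h1
  rw [Finset.sum_congr rfl fun i _ => e0 i] at h0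
  simp only [coeff_add, coeff_X_pow, coeff_C] at h2 h1 h0
  norm_num at h2 h1 h0
  refine ⟨h2, ?_, h0⟩
  rw [← Finset.mul_sum] at h1
  rcases mul_eq_zero.mp h1 with h | h
  · exact absurd h (two_ne_zero_of_aniso hF)
  · exact h

/-- Reflection: if `|a|² = 1` and `a·b = 0` then `|b|²` is a sum of `m` squares. -/
lemma reflection_step {F : Type*} [Field F] (hF : SosAniso F) (m : ℕ)
    (a b : Fin (m + 1) → F) (ha : ∑ i, a i ^ 2 = 1) (hab : ∑ i, a i * b i = 0) :
    ∃ c : Fin m → F, ∑ i, c i ^ 2 = ∑ i, b i ^ 2 := by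
  rw [Fin.sum_univ_succ] at ha hab
  set A' : F := ∑ i : Fin m, a i.succ ^ 2 with hA'
  set S' : F := ∑ i : Fin m, a i.succ * b i.succ with hS'
  by_cases h1 : a 0 = 1
  · -- a = e₀, b₀ = 0
    have hA0 : ∑ i : Fin m, a i.succ ^ 2 = 0 := by
      rw [← hA']
      linear_combination ha - (a 0 + 1) * h1
    have hsucc : ∀ i : Fin m, a i.succ = 0 := hF m (fun i => a i.succ) hA0
    have hS0 : S' = 0 := by
      rw [hS']
      exact Finset.sum_eq_zero fun i _ => by rw [hsucc i, zero_mul]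
    have hb0 : b 0 = 0 := by
      rw [h1, one_mul, hS0] at hab
      linear_combination hab
    refine ⟨fun i => b i.succ, ?_⟩
    rw [Fin.sum_univ_succ, hb0]
    ring
  · -- reflect
    have hne : a 0 - 1 ≠ 0 := sub_ne_zero.mpr h1
    obtain ⟨κ, hk⟩ : ∃ κ : F, κ * (a 0 - 1) = b 0 := ⟨b 0 / (a 0 - 1), div_mul_cancel₀ (b 0) hne⟩
    refine ⟨fun i => b i.succ - κ * a i.succ, ?_⟩
    have expand : ∑ i : Fin m, (b i.succ - κ * a i.succ) ^ 2 =
        (∑ i : Fin m, b i.succ ^ 2) - 2 * κ * S' + κ ^ 2 * A' := by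
      rw [hS', hA', Finset.mul_sum, Finset.mul_sum, ← Finset.sum_sub_distrib,
        ← Finset.sum_add_distrib]
      exact Finset.sum_congr rfl fun i _ => by ring
    rw [expand, Fin.sum_univ_succ]
    -- ha : a 0 ^ 2 + A' = 1,  hab : a 0 * b 0 + S' = 0,  hk : κ (a0-1) = b0
    linear_combination κ ^ 2 * ha - 2 * κ * hab + (b 0 - κ * (a 0 + 1)) * hk

lemma sos_pad {A : Type*} [CommRing A] {m m' : ℕ} (h : m ≤ m') (u : Fin m → A) :
    ∃ v : Fin m' → A, ∑ i, v i ^ 2 = ∑ i, u i ^ 2 := by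
  have hmm : m + (m' - m) = m' := by omega
  let e : Fin m ⊕ Fin (m' - m) ≃ Fin m' := finSumFinEquiv.trans (finCongr hmm)
  refine ⟨fun i => Sum.elim u 0 (e.symm i), ?_⟩
  rw [← Equiv.sum_comp e (fun x => Sum.elim u 0 (e.symm x) ^ 2)]
  simp only [Equiv.symm_apply_apply]
  rw [Fintype.sum_sum_type]
  simp

noncomputable abbrev Kn (n : ℕ) := FractionRing (MvPolynomial (Fin n) ℝ)

lemma sosAniso_Kn (n : ℕ) : SosAniso (Kn n) :=
  sosAniso_fractionRing (sosAniso_mvPoly n)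

/-- The transition homomorphism. -/
noncomputable def beta (n : ℕ) : MvPolynomial (Fin (n + 1)) ℝ →+* RatFunc (Kn n) :=
  (algebraMap (Polynomial (Kn n)) (RatFunc (Kn n))).comp
    ((Polynomial.mapRingHom (algebraMap (MvPolynomial (Fin n) ℝ) (Kn n))).comp
      (MvPolynomial.finSuccEquiv ℝ n).toAlgHom.toRingHom)

lemma beta_injective (n : ℕ) : Function.Injective (beta n) := by
  have h1 := RatFunc.algebraMap_injective (Kn n)
  have h2 := Polynomial.map_injective _
    (IsFractionRing.injective (MvPolynomial (Fin n) ℝ) (Kn n))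
  have h3 := (MvPolynomial.finSuccEquiv ℝ n).injective
  intro x y hxy
  simp only [beta, RingHom.coe_comp, Function.comp_apply, AlgHom.toRingHom_eq_coe,
    AlgHom.coe_coe, Polynomial.coe_mapRingHom] at hxy
  exact h3 (h2 (h1 hxy))

lemma beta_sum (n : ℕ) :
    beta n (∑ i : Fin (n + 1), MvPolynomial.X i ^ 2) =
      algebraMap (Polynomial (Kn n)) (RatFunc (Kn n))
        (X ^ 2 + C (algebraMap (MvPolynomial (Fin n) ℝ) (Kn n)
          (∑ i : Fin n, MvPolynomial.X i ^ 2))) := by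
  have h1 : (MvPolynomial.finSuccEquiv ℝ n) (∑ i : Fin (n + 1), MvPolynomial.X i ^ 2) =
      X ^ 2 + C (∑ i : Fin n, MvPolynomial.X i ^ 2) := by
    rw [Fin.sum_univ_succ, map_add, map_pow, MvPolynomial.finSuccEquiv_X_zero, map_sum]
    congr 1
    rw [map_sum]
    exact Finset.sum_congr rfl fun i _ => by
      rw [map_pow, MvPolynomial.finSuccEquiv_X_succ, ← map_pow]
  show (algebraMap (Polynomial (Kn n)) (RatFunc (Kn n)))
      ((Polynomial.map (algebraMap (MvPolynomial (Fin n) ℝ) (Kn n)))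
        ((MvPolynomial.finSuccEquiv ℝ n) (∑ i : Fin (n + 1), MvPolynomial.X i ^ 2))) = _
  rw [h1]
  congr 1
  rw [Polynomial.map_add, Polynomial.map_pow, Polynomial.map_X, Polynomial.map_C]

/-- Main theorem: `x₁² + ⋯ + xₙ²` is not a sum of `m < n` squares of rational functions. -/
theorem noSos : ∀ (m n : ℕ), m < n → ∀ f : Fin m → Kn n,
    algebraMap (MvPolynomial (Fin n) ℝ) (Kn n) (∑ i, MvPolynomial.X i ^ 2) ≠ ∑ i, f i ^ 2 := by
  intro m
  induction m with
  | zero =>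
    intro n hn f hyp
    simp only [Finset.univ_eq_empty, Finset.sum_empty, Fin.sum_univ_zero] at hyp
    have h0 : (∑ i : Fin n, MvPolynomial.X i ^ 2 : MvPolynomial (Fin n) ℝ) = 0 :=
      IsFractionRing.injective (MvPolynomial (Fin n) ℝ) (Kn n) (by rw [hyp, map_zero])
    have := sosAniso_mvPoly n n (fun i => MvPolynomial.X i) h0 ⟨0, hn⟩
    exact MvPolynomial.X_ne_zero _ this
  | succ m ih =>
    intro n hn f hyp
    obtain ⟨n', rfl⟩ : ∃ n', n = n' + 1 := ⟨n - 1, by omega⟩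
    have hm : m < n' := by omega
    set d : Kn n' := algebraMap (MvPolynomial (Fin n') ℝ) (Kn n')
      (∑ i : Fin n', MvPolynomial.X i ^ 2) with hd
    -- lift to RatFunc (Kn n')
    have Φinj := beta_injective n'
    set Φ : Kn (n' + 1) →+* RatFunc (Kn n') := IsFractionRing.lift Φinj with hΦ
    have hyp2 : algebraMap (Polynomial (Kn n')) (RatFunc (Kn n')) (X ^ 2 + C d) =
        ∑ i, (Φ (f i)) ^ 2 := by
      have happ : Φ (algebraMap (MvPolynomial (Fin (n' + 1)) ℝ) (Kn (n' + 1))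
          (∑ i : Fin (n' + 1), MvPolynomial.X i ^ 2)) =
          beta n' (∑ i : Fin (n' + 1), MvPolynomial.X i ^ 2) :=
        IsFractionRing.lift_algebraMap Φinj _
      rw [← beta_sum n', ← happ, hyp, map_sum]
      exact Finset.sum_congr rfl fun i _ => map_pow Φ (f i) 2
    obtain ⟨w, hw⟩ := cassels (sosAniso_poly (sosAniso_Kn n')) (X ^ 2 + C d) (m + 1)
      (fun i => Φ (f i)) hyp2
    obtain ⟨ha, hab, hb⟩ := sum_sq_coeffs (sosAniso_Kn n') d w hw.symm
    obtain ⟨c, hc⟩ := reflection_step (sosAniso_Kn n') m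
      (fun i => (w i).coeff 1) (fun i => (w i).coeff 0) ha hab
    exact ih n' hm c (hc.trans hb).symm

end SosDevelopment

open MvPolynomial

/-- for `n > 2^k` and `r ≤ 2^k` there are no nonzero sums of `r` squares
`g₁, g₂` with `(x₁²+⋯+xₙ²)·g₁ = g₂`. -/
theorem stmt_5 (n k r : ℕ) (hn : 2 ^ k < n) (hr : r ≤ 2 ^ k) :
    ¬ ∃ g₁ g₂ : MvPolynomial (Fin n) ℝ, g₁ ≠ 0 ∧ g₂ ≠ 0 ∧
      (∃ q : Fin r → MvPolynomial (Fin n) ℝ, g₁ = ∑ i, q i ^ 2) ∧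
      (∃ q : Fin r → MvPolynomial (Fin n) ℝ, g₂ = ∑ i, q i ^ 2) ∧
      (∑ i : Fin n, X i ^ 2) * g₁ = g₂ := by
  rintro ⟨g₁, g₂, hg₁, hg₂, ⟨q₁, hq₁⟩, ⟨q₂, hq₂⟩, heq⟩
  set N := 2 ^ k with hN
  set φ := algebraMap (MvPolynomial (Fin n) ℝ) (Kn n) with hφ
  have φinj : Function.Injective φ := IsFractionRing.injective _ _
  have hφg₁ : φ g₁ ≠ 0 := fun h => hg₁ (φinj (by rw [h, map_zero]))
  -- φ g₁ and φ g₂ are sums of N squares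
  have hs₁ : ∃ u : Fin N → Kn n, φ g₁ = ∑ i, u i ^ 2 := by
    obtain ⟨v, hv⟩ := sos_pad hr (fun i => φ (q₁ i))
    refine ⟨v, ?_⟩
    rw [hv, hq₁, map_sum]
    exact Finset.sum_congr rfl fun i _ => map_pow φ (q₁ i) 2
  have hs₂ : ∃ u : Fin N → Kn n, φ g₂ = ∑ i, u i ^ 2 := by
    obtain ⟨v, hv⟩ := sos_pad hr (fun i => φ (q₂ i))
    refine ⟨v, ?_⟩
    rw [hv, hq₂, map_sum]
    exact Finset.sum_congr rfl fun i _ => map_pow φ (q₂ i) 2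
  -- the inverse of φ g₁ is a sum of N squares
  have hsinv : ∃ u : Fin N → Kn n, (φ g₁)⁻¹ = ∑ i, u i ^ 2 := by
    obtain ⟨u, hu⟩ := hs₁
    refine ⟨fun i => u i * (φ g₁)⁻¹, ?_⟩
    have : ∑ i, (u i * (φ g₁)⁻¹) ^ 2 = (∑ i, u i ^ 2) * ((φ g₁)⁻¹) ^ 2 := by
      rw [Finset.sum_mul]
      exact Finset.sum_congr rfl fun i _ => by ring
    rw [this, ← hu]
    field_simp
  -- therefore the image of ∑ xᵢ² is a sum of N squares
  have hc : φ (∑ i : Fin n, X i ^ 2) = φ g₂ * (φ g₁)⁻¹ := by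
    have h2 : φ (∑ i : Fin n, X i ^ 2) * φ g₁ = φ g₂ := by rw [← map_mul, heq]
    field_simp [← h2]
    exact h2
  obtain ⟨w, hw⟩ := sos_mul hs₂ hsinv ⟨k, hN⟩
  exact noSos N n hn w (by rw [hc, hw])
end

section
/- There do not exist real symmetric 3×3 matrices A₀, A₁, A₂, A₃, A₄ such that the closed unit ball in ℝ⁴ equals {p ∈ ℝ⁴ : A₀ + A₁p₁ + A₂p₂ + A₃p₃ + A₄p₄ ⪰ 0}. -/
open Matrix MeasureTheory Set Metric
open scoped NNReal ENNReal

namespace Stmt9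

noncomputable section


/-- quadratic form of a `3×3` matrix -/
def qf (B : Matrix (Fin 3) (Fin 3) ℝ) (v : Fin 3 → ℝ) : ℝ := v ⬝ᵥ B *ᵥ v

/-- the pencil -/
def MA (A : Fin 5 → Matrix (Fin 3) (Fin 3) ℝ) (p : Fin 4 → ℝ) : Matrix (Fin 3) (Fin 3) ℝ :=
  A 0 + ∑ i : Fin 4, p i • A i.succ

/-- the common kernel -/
def V (A : Fin 5 → Matrix (Fin 3) (Fin 3) ℝ) : Submodule ℝ (Fin 3 → ℝ) :=
  ⨅ k, LinearMap.ker (A k).mulVecLin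

lemma mem_V {A : Fin 5 → Matrix (Fin 3) (Fin 3) ℝ} {v : Fin 3 → ℝ} :
    v ∈ V A ↔ ∀ k, A k *ᵥ v = 0 := by
  simp [V, Submodule.mem_iInf, LinearMap.mem_ker]

lemma continuous_qf (B : Matrix (Fin 3) (Fin 3) ℝ) : Continuous (qf B) := by
  show Continuous fun v : Fin 3 → ℝ => ∑ a, v a * ∑ b, B a b * v b
  exact continuous_finset_sum _ fun a _ => (continuous_apply a).mul
    (continuous_finset_sum _ fun b _ => continuous_const.mul (continuous_apply b))

lemma qf_nonneg {B : Matrix (Fin 3) (Fin 3) ℝ} (h : B.PosSemidef) (v : Fin 3 → ℝ) :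
    0 ≤ qf B v := by simpa [qf] using h.dotProduct_mulVec_nonneg v

lemma qf_eq_zero_mulVec {B : Matrix (Fin 3) (Fin 3) ℝ} (h : B.PosSemidef) {v : Fin 3 → ℝ}
    (hv : qf B v = 0) : B *ᵥ v = 0 :=
  (h.dotProduct_mulVec_zero_iff v).mp (by simpa [qf] using hv)

lemma qf_add (B C : Matrix (Fin 3) (Fin 3) ℝ) (v : Fin 3 → ℝ) :
    qf (B + C) v = qf B v + qf C v := by
  simp [qf, Matrix.add_mulVec, dotProduct_add]

lemma qf_matsmul (t : ℝ) (B : Matrix (Fin 3) (Fin 3) ℝ) (v : Fin 3 → ℝ) :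
    qf (t • B) v = t * qf B v := by
  simp [qf, Matrix.smul_mulVec, dotProduct_smul]

lemma qf_smul (t : ℝ) (B : Matrix (Fin 3) (Fin 3) ℝ) (v : Fin 3 → ℝ) :
    qf B (t • v) = t ^ 2 * qf B v := by
  simp [qf, Matrix.mulVec_smul, dotProduct_smul, smul_dotProduct, smul_eq_mul]
  ring

lemma qf_sum {s : Finset (Fin 4)} (B : Fin 4 → Matrix (Fin 3) (Fin 3) ℝ) (v : Fin 3 → ℝ) :
    qf (∑ i ∈ s, B i) v = ∑ i ∈ s, qf (B i) v := by
  classical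
  induction s using Finset.induction with
  | empty => simp [qf]
  | insert _ _ h ih => simp [Finset.sum_insert h, qf_add, ih]

lemma qf_MA (A : Fin 5 → Matrix (Fin 3) (Fin 3) ℝ) (p : Fin 4 → ℝ) (v : Fin 3 → ℝ) :
    qf (MA A p) v = qf (A 0) v + ∑ i : Fin 4, p i * qf (A i.succ) v := by
  rw [MA, qf_add, qf_sum]
  simp [qf_matsmul]

lemma symm_MA {A : Fin 5 → Matrix (Fin 3) (Fin 3) ℝ} (hA : ∀ k, (A k).IsSymm)
    (p : Fin 4 → ℝ) : (MA A p).IsSymm := by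
  unfold MA Matrix.IsSymm
  rw [Matrix.transpose_add, Matrix.transpose_sum]
  simp only [Matrix.transpose_smul]
  rw [(hA 0).eq]
  congr 1
  exact Finset.sum_congr rfl fun i _ => by rw [(hA i.succ).eq]

lemma herm_of_symm {B : Matrix (Fin 3) (Fin 3) ℝ} (hB : B.IsSymm) : B.IsHermitian := by
  unfold Matrix.IsHermitian
  rw [Matrix.conjTranspose]
  ext i j
  simpa [Matrix.IsSymm] using congrFun (congrFun hB i) j

lemma dot_symm {B : Matrix (Fin 3) (Fin 3) ℝ} (hB : B.IsSymm) (u w : Fin 3 → ℝ) :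
    u ⬝ᵥ B *ᵥ w = (B *ᵥ u) ⬝ᵥ w := by
  rw [dotProduct_mulVec, ← Matrix.mulVec_transpose, hB.eq]

lemma MA_mulVec_V {A : Fin 5 → Matrix (Fin 3) (Fin 3) ℝ} {v : Fin 3 → ℝ} (hv : v ∈ V A)
    (p : Fin 4 → ℝ) : MA A p *ᵥ v = 0 := by
  have hs : (∑ i : Fin 4, p i • A i.succ) *ᵥ v = ∑ i : Fin 4, (p i • A i.succ) *ᵥ v := by
    induction (Finset.univ : Finset (Fin 4)) using Finset.induction with
    | empty => simp
    | insert _ _ h ih => simp [Finset.sum_insert h, Matrix.add_mulVec, ih]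
  rw [mem_V] at hv
  rw [MA, Matrix.add_mulVec, hv 0, hs]
  simp [Matrix.smul_mulVec, fun i : Fin 4 => hv i.succ]


lemma exists_kernel_notin {A : Fin 5 → Matrix (Fin 3) (Fin 3) ℝ}
    (hA : ∀ k, (A k).IsSymm)
    (hrep : ∀ p : Fin 4 → ℝ, (∑ i, p i ^ 2 ≤ 1) ↔ (MA A p).PosSemidef)
    (hV : V A ≠ ⊤) {p : Fin 4 → ℝ} (hp : ∑ i, p i ^ 2 = 1) :
    ∃ v, MA A p *ᵥ v = 0 ∧ v ∉ V A := by
  by_contra hcon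
  push_neg at hcon
  obtain ⟨W, hW⟩ := Submodule.exists_isCompl (V A)
  have hpsd : (MA A p).PosSemidef := (hrep p).mp hp.le
  have hWne : W ≠ ⊥ := by
    intro h
    apply hV
    rw [h] at hW
    simpa using hW.sup_eq_top
  obtain ⟨w₀, hw₀W, hw₀⟩ := Submodule.exists_mem_ne_zero_of_ne_bot hWne
  set K : Set (Fin 3 → ℝ) := (W : Set (Fin 3 → ℝ)) ∩ sphere 0 1 with hK
  have hKc : IsCompact K := (isCompact_sphere 0 1).inter_left W.closed_of_finiteDimensional
  have hKne : K.Nonempty := by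
    refine ⟨‖w₀‖⁻¹ • w₀, ⟨W.smul_mem _ hw₀W, ?_⟩⟩
    have : ‖w₀‖ ≠ 0 := norm_ne_zero_iff.mpr hw₀
    simp [mem_sphere_zero_iff_norm, norm_smul, abs_of_nonneg, inv_mul_cancel₀ this]
  obtain ⟨z, hzK, hzmin⟩ := hKc.exists_isMinOn hKne (continuous_qf (MA A p)).continuousOn
  set c := qf (MA A p) z with hcdef
  have hzV : z ∉ V A := by
    intro hzv
    have h1 : z ∈ V A ⊓ W := ⟨hzv, hzK.1⟩
    rw [hW.inf_eq_bot] at h1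
    have hz0 : z = 0 := by simpa using h1
    have : ‖z‖ = 1 := mem_sphere_zero_iff_norm.mp hzK.2
    rw [hz0] at this
    simp at this
  have hc0 : 0 < c := by
    rcases (qf_nonneg hpsd z).lt_or_eq with h | h
    · exact h
    · exact absurd (hcon z (qf_eq_zero_mulVec hpsd h.symm)) hzV
  obtain ⟨y, hyK, hymax⟩ := hKc.exists_isMaxOn hKne
    (((continuous_qf (MA A p)).sub (continuous_qf (A 0))).abs).continuousOn
  set b := |qf (MA A p) y - qf (A 0) y| with hbdef
  have hb0 : 0 ≤ b := abs_nonneg _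
  set ε := c / (b + c) with hεdef
  have hbc : 0 < b + c := by linarith
  have hε : 0 < ε := div_pos hc0 hbc
  set q : Fin 4 → ℝ := fun i => (1 + ε) * p i with hqdef
  have hqpsd : (MA A q).PosSemidef := by
    refine Matrix.PosSemidef.of_dotProduct_mulVec_nonneg ?_ ?_
    · exact herm_of_symm (symm_MA hA q)
    · intro x
      suffices h : 0 ≤ qf (MA A q) x by simpa [qf] using h
      have hxmem : x ∈ V A ⊔ W := by rw [hW.sup_eq_top]; trivial
      obtain ⟨v, hv, w, hw, rfl⟩ := Submodule.mem_sup.mp hxmem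
      have hMv : ∀ r, MA A r *ᵥ v = 0 := fun r => MA_mulVec_V hv r
      have hsplit : qf (MA A q) (v + w) = qf (MA A q) w := by
        unfold qf
        rw [Matrix.mulVec_add, hMv q, zero_add, add_dotProduct,
          dot_symm (symm_MA hA q), hMv q, zero_dotProduct, zero_add]
      rw [hsplit]
      rcases eq_or_ne w 0 with h0 | h0
      · rw [h0]
        simp [qf]
      · have hwn : ‖w‖ ≠ 0 := norm_ne_zero_iff.mpr h0
        set u : Fin 3 → ℝ := ‖w‖⁻¹ • w with hudef
        have huK : u ∈ K := by
          refine ⟨W.smul_mem _ hw, ?_⟩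
          rw [mem_sphere_zero_iff_norm, hudef, norm_smul, norm_inv, norm_norm,
            inv_mul_cancel₀ hwn]
        have h1 : c ≤ qf (MA A p) u := hzmin huK
        have h2 : |qf (MA A p) u - qf (A 0) u| ≤ b := hymax huK
        have hqq : qf (MA A q) u
            = qf (MA A p) u + ε * (qf (MA A p) u - qf (A 0) u) := by
          rw [qf_MA, qf_MA]
          have hterm : ∀ i : Fin 4, q i * qf (A i.succ) u
              = p i * qf (A i.succ) u + ε * (p i * qf (A i.succ) u) := by
            intro i; simp only [hqdef]; ring
          rw [Finset.sum_congr rfl (fun i _ => hterm i), Finset.sum_add_distrib,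
            ← Finset.mul_sum]
          ring
        have hεb : ε * b ≤ c := by
          rw [hεdef, div_mul_eq_mul_div, div_le_iff₀ hbc]
          nlinarith
        have hu0 : 0 ≤ qf (MA A q) u := by
          have h3 : -b ≤ qf (MA A p) u - qf (A 0) u := neg_le_of_abs_le h2
          rw [hqq]
          nlinarith
        have hscale : qf (MA A q) w = ‖w‖ ^ 2 * qf (MA A q) u := by
          rw [hudef, qf_smul]
          field_simp
        rw [hscale]
        positivity
  have hle := (hrep q).mpr hqpsd
  have hsq : ∑ i, q i ^ 2 = (1 + ε) ^ 2 := by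
    simp only [hqdef, mul_pow]
    rw [← Finset.mul_sum, hp, mul_one]
  rw [hsq] at hle
  nlinarith

lemma point_structure {A : Fin 5 → Matrix (Fin 3) (Fin 3) ℝ}
    (hrep : ∀ p : Fin 4 → ℝ, (∑ i, p i ^ 2 ≤ 1) ↔ (MA A p).PosSemidef)
    {p : Fin 4 → ℝ} (hp : ∑ i, p i ^ 2 = 1) {v : Fin 3 → ℝ}
    (hker : MA A p *ᵥ v = 0) (hvV : v ∉ V A) :
    0 < qf (A 0) v ∧ ∀ i : Fin 4, qf (A i.succ) v = -(qf (A 0) v) * p i := by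
  set c₀ := qf (A 0) v with hc₀def
  set cc : Fin 4 → ℝ := fun i => qf (A i.succ) v with hccdef
  have hMA0 : MA A 0 = A 0 := by simp [MA]
  have hpsd0 : (A 0).PosSemidef := by
    have := (hrep 0).mp (by simp)
    rwa [hMA0] at this
  have hc0 : 0 ≤ c₀ := qf_nonneg hpsd0 v
  have hg : ∀ q : Fin 4 → ℝ, (∑ i, q i ^ 2 ≤ 1) → 0 ≤ c₀ + ∑ i, q i * cc i := by
    intro q hq
    have := qf_nonneg ((hrep q).mp hq) v
    rwa [qf_MA] at this
  have hgp : c₀ + ∑ i, p i * cc i = 0 := by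
    have h1 : qf (MA A p) v = 0 := by unfold qf; rw [hker]; simp
    rw [qf_MA] at h1; exact h1
  have hpc : ∑ i, p i * cc i = -c₀ := by linarith
  set u : Fin 4 → ℝ := fun i => cc i + c₀ * p i with hudef
  set U := ∑ i, u i ^ 2 with hUdef
  have hU0 : 0 ≤ U := Finset.sum_nonneg fun i _ => sq_nonneg _
  have hcu : ∀ i, cc i = u i - c₀ * p i := fun i => by simp [hudef]
  have hpu : ∑ i, p i * u i = 0 := by
    have expand : ∑ i, p i * u i = (∑ i, p i * cc i) + c₀ * ∑ i, p i ^ 2 := by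
      rw [Finset.mul_sum, ← Finset.sum_add_distrib]
      refine Finset.sum_congr rfl fun i _ => ?_
      simp [hudef]; ring
    rw [expand, hp, hpc]; ring
  have huc : ∑ i, u i * cc i = U := by
    have expand : ∑ i, u i * cc i = (∑ i, u i ^ 2) - c₀ * ∑ i, p i * u i := by
      rw [Finset.mul_sum, ← Finset.sum_sub_distrib]
      refine Finset.sum_congr rfl fun i _ => ?_
      rw [hcu i]; ring
    rw [expand, hpu, hUdef]; ring
  have hUzero : U = 0 := by
    set t : ℝ := 1 / (c₀ + 1) with htdef
    have hc1 : 0 < c₀ + 1 := by linarith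
    have ht : 0 < t := by positivity
    have htc : c₀ * t < 1 := by
      rw [htdef, mul_one_div, div_lt_one hc1]; linarith
    set s : ℝ := 1 + t ^ 2 * U with hsdef
    have hs1 : 1 ≤ s := by nlinarith
    have hs0 : 0 < s := by linarith
    set q : Fin 4 → ℝ := fun i => s⁻¹ * (p i - t * u i) with hqdef
    have e1 : ∑ i, (p i - t * u i) ^ 2 = s := by
      have expand : ∑ i, (p i - t * u i) ^ 2
          = (∑ i, p i ^ 2) - 2 * t * (∑ i, p i * u i) + t ^ 2 * ∑ i, u i ^ 2 := by
        rw [Finset.sum_congr rfl fun (i : Fin 4) _ =>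
          show (p i - t * u i) ^ 2
            = p i ^ 2 - 2 * t * (p i * u i) + t ^ 2 * u i ^ 2 by ring]
        rw [Finset.sum_add_distrib, Finset.sum_sub_distrib, ← Finset.mul_sum, ← Finset.mul_sum]
      rw [expand, hp, hpu, hsdef]; ring
    have hsumq : ∑ i, q i ^ 2 = s⁻¹ := by
      have : ∑ i, q i ^ 2 = s⁻¹ ^ 2 * ∑ i, (p i - t * u i) ^ 2 := by
        rw [Finset.mul_sum]
        refine Finset.sum_congr rfl fun i _ => ?_
        simp only [hqdef]; ring
      rw [this, e1]
      field_simp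
    have hq1 : ∑ i, q i ^ 2 ≤ 1 := by
      rw [hsumq]
      have h2 : s⁻¹ ≤ 1 := by
        rw [inv_le_one_iff₀]; right; exact hs1
      exact h2
    have hgq := hg q hq1
    have hqc : ∑ i, q i * cc i = s⁻¹ * (-c₀ - t * U) := by
      have expand : ∑ i, q i * cc i
          = s⁻¹ * (∑ i, p i * cc i) - s⁻¹ * (t * ∑ i, u i * cc i) := by
        rw [Finset.sum_congr rfl fun (i : Fin 4) _ =>
          show q i * cc i
            = s⁻¹ * (p i * cc i) - s⁻¹ * (t * (u i * cc i)) by simp only [hqdef]; ring]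
        rw [Finset.sum_sub_distrib, ← Finset.mul_sum, ← Finset.mul_sum, ← Finset.mul_sum]
      rw [expand, hpc, huc]; ring
    rw [hqc] at hgq
    have hmul : 0 ≤ c₀ * s + (-c₀ - t * U) := by
      have := mul_le_mul_of_nonneg_left hgq hs0.le
      have hss : s * s⁻¹ = 1 := mul_inv_cancel₀ hs0.ne'
      nlinarith
    have hfinal : 0 ≤ t * U * (c₀ * t - 1) := by
      have : c₀ * s + (-c₀ - t * U) = t * U * (c₀ * t - 1) := by rw [hsdef]; ring
      linarith [hmul, this.symm.le, this.le]
    by_contra hne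
    have hUpos : 0 < U := lt_of_le_of_ne hU0 (Ne.symm hne)
    have : t * U * (c₀ * t - 1) < 0 :=
      mul_neg_of_pos_of_neg (mul_pos ht hUpos) (by linarith)
    linarith
  have hueq : ∀ i, u i = 0 := by
    intro i
    have h := (Finset.sum_eq_zero_iff_of_nonneg (fun j _ => sq_nonneg (u j))).mp hUzero
      i (Finset.mem_univ i)
    exact pow_eq_zero_iff (two_ne_zero) |>.mp h
  have hcc : ∀ i, cc i = -c₀ * p i := fun i => by rw [hcu i, hueq i]; ring
  have hc₀ne : c₀ ≠ 0 := by
    intro h0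
    apply hvV
    rw [mem_V]
    have hcc0 : ∀ i, cc i = 0 := fun i => by rw [hcc i, h0]; ring
    have hker0 : ∀ r : Fin 4 → ℝ, (∑ i, r i ^ 2 ≤ 1) → MA A r *ᵥ v = 0 := by
      intro r hr
      apply qf_eq_zero_mulVec ((hrep r).mp hr)
      rw [qf_MA]
      have : ∀ i : Fin 4, r i * qf (A i.succ) v = 0 := fun i => by
        have := hcc0 i; rw [hccdef] at this; simp at this; rw [this]; ring
      rw [Finset.sum_congr rfl fun i _ => this i]
      simp [← hc₀def, h0]
    have h00 : A 0 *ᵥ v = 0 := by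
      have := hker0 0 (by simp)
      rwa [hMA0] at this
    intro k
    refine Fin.cases h00 (fun i => ?_) k
    have hM : MA A (fun j => if j = i then (1/2:ℝ) else 0)
        = A 0 + (1/2 : ℝ) • A i.succ := by
      unfold MA
      congr 1
      rw [Finset.sum_eq_single i]
      · simp
      · intro j _ hj; simp [hj]
      · intro h; exact absurd (Finset.mem_univ i) h
    have hs : ∑ j : Fin 4, (if j = i then (1/2:ℝ) else 0) ^ 2 ≤ 1 := by
      rw [Finset.sum_eq_single i]
      · norm_num
      · intro j _ hj; simp [hj]
      · intro h; exact absurd (Finset.mem_univ i) h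
    have hk := hker0 _ hs
    rw [hM, Matrix.add_mulVec, h00, zero_add, Matrix.smul_mulVec] at hk
    have := smul_eq_zero.mp hk
    rcases this with h | h
    · norm_num at h
    · exact h
  refine ⟨lt_of_le_of_ne hc0 (Ne.symm hc₀ne), fun i => ?_⟩
  have := hcc i
  rw [hccdef] at this
  simpa using this

lemma lip_on_ball {f : (Fin 4 → ℝ) → (Fin 4 → ℝ)} (hf : ContDiff ℝ 1 f) (n : ℕ) :
    ∃ K : ℝ≥0, LipschitzOnWith K f (closedBall 0 n) := by
  have hc : IsCompact (closedBall (0 : Fin 4 → ℝ) n) := isCompact_closedBall _ _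
  obtain ⟨C, hC⟩ := hc.exists_bound_of_continuousOn (hf.continuous_fderiv one_ne_zero).continuousOn
  refine ⟨C.toNNReal, Convex.lipschitzOnWith_of_nnnorm_fderiv_le
    (fun x _ => (hf.differentiable one_ne_zero).differentiableAt) (fun x hx => ?_)
    (convex_closedBall _ _)⟩
  have h1 : ‖fderiv ℝ f x‖ ≤ C := hC x hx
  calc ‖fderiv ℝ f x‖₊ = ‖fderiv ℝ f x‖.toNNReal := (norm_toNNReal).symm
    _ ≤ C.toNNReal := Real.toNNReal_mono h1

lemma sphere_slice_null :
    volume {z : Fin 4 → ℝ | (z 1) ^ 2 + (z 2) ^ 2 + (z 3) ^ 2 = 1} = 0 := by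
  -- first: the euclidean sphere-like set in `Fin 3 → ℝ` is null
  have hS : volume {y : Fin 3 → ℝ | ∑ j, y j ^ 2 = 1} = 0 := by
    have me := EuclideanSpace.volume_preserving_symm_measurableEquiv_toLp (Fin 3)
    have hmeas : MeasurableSet {y : Fin 3 → ℝ | ∑ j, y j ^ 2 = 1} := by
      have : Continuous fun y : Fin 3 → ℝ => ∑ j, y j ^ 2 :=
        continuous_finset_sum _ fun j _ => (continuous_apply j).pow 2
      exact this.measurable (measurableSet_singleton 1)
    have := me.measure_preimage hmeas.nullMeasurableSet
    rw [← this]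
    have hpre : (MeasurableEquiv.toLp 2 (Fin 3 → ℝ)).symm ⁻¹'
        {y : Fin 3 → ℝ | ∑ j, y j ^ 2 = 1} = Metric.sphere (0 : EuclideanSpace ℝ (Fin 3)) 1 := by
      ext u
      simp only [Set.mem_preimage, Set.mem_setOf_eq, mem_sphere_iff_norm, sub_zero]
      have happ : ∀ j : Fin 3, (MeasurableEquiv.toLp 2 (Fin 3 → ℝ)).symm u j = u j :=
        fun _ => rfl
      simp only [happ]
      have hnorm : ‖u‖ = Real.sqrt (∑ j, u j ^ 2) := by
        rw [EuclideanSpace.norm_eq]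
        congr 1
        refine Finset.sum_congr rfl fun j _ => ?_
        rw [Real.norm_eq_abs, sq_abs]
      constructor
      · intro h
        rw [hnorm, h, Real.sqrt_one]
      · intro h
        have h2 : ‖u‖ ^ 2 = 1 := by rw [h]; norm_num
        rw [hnorm, Real.sq_sqrt (Finset.sum_nonneg fun j _ => sq_nonneg _)] at h2
        exact h2
    rw [hpre]
    exact Measure.addHaar_sphere volume 0 1
  -- now transfer through the product splitting
  have mp := MeasureTheory.volume_preserving_piFinSuccAbove (fun _ : Fin 4 => ℝ) 0
  set e := MeasurableEquiv.piFinSuccAbove (fun _ : Fin 4 => ℝ) 0 with he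
  have hpre : {z : Fin 4 → ℝ | (z 1) ^ 2 + (z 2) ^ 2 + (z 3) ^ 2 = 1}
      = e ⁻¹' (Set.univ ×ˢ {y : Fin 3 → ℝ | ∑ j, y j ^ 2 = 1}) := by
    ext z
    simp only [Set.mem_preimage, Set.mem_prod, Set.mem_univ, true_and, Set.mem_setOf_eq,
      Fin.sum_univ_three]
    exact Iff.rfl
  rw [hpre]
  have hmeas2 : MeasurableSet {y : Fin 3 → ℝ | ∑ j, y j ^ 2 = 1} := by
    have : Continuous fun y : Fin 3 → ℝ => ∑ j, y j ^ 2 :=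
      continuous_finset_sum _ fun j _ => (continuous_apply j).pow 2
    exact this.measurable (measurableSet_singleton 1)
  rw [mp.measure_preimage ((MeasurableSet.univ.prod hmeas2)).nullMeasurableSet,
    Measure.volume_eq_prod, Measure.prod_prod, hS, mul_zero]

lemma no_surj (F : (Fin 4 → ℝ) → (Fin 4 → ℝ)) (hF : ContDiff ℝ 1 F)
    (hsurj : ∀ x, ∃ z, ((z 1) ^ 2 + (z 2) ^ 2 + (z 3) ^ 2 = 1) ∧ F z = x) : False := by
  set D : Set (Fin 4 → ℝ) := {z | (z 1) ^ 2 + (z 2) ^ 2 + (z 3) ^ 2 = 1} with hD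
  have hvol : volume D = 0 := sphere_slice_null
  have hh4 : (μH[(4:ℝ)] : Measure (Fin 4 → ℝ)) = volume := by
    have := MeasureTheory.hausdorffMeasure_pi_real (ι := Fin 4)
    rwa [Fintype.card_fin, Nat.cast_ofNat] at this
  have hHD : μH[(4:ℝ)] D = 0 := by rw [hh4]; exact hvol
  have himg : ∀ n : ℕ, μH[(4:ℝ)] (F '' (D ∩ closedBall 0 n)) = 0 := by
    intro n
    obtain ⟨K, hK⟩ := lip_on_ball hF n
    have hK' : LipschitzOnWith K F (D ∩ closedBall 0 n) :=
      hK.mono (Set.inter_subset_right)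
    have := hK'.hausdorffMeasure_image_le (by norm_num : (0:ℝ) ≤ 4)
    have hDn : μH[(4:ℝ)] (D ∩ closedBall 0 n) = 0 :=
      measure_mono_null Set.inter_subset_left hHD
    rw [hDn, mul_zero] at this
    exact le_antisymm this zero_le
  have hcover : (Set.univ : Set (Fin 4 → ℝ)) ⊆ ⋃ n : ℕ, F '' (D ∩ closedBall 0 n) := by
    intro x _
    obtain ⟨z, hz, hzx⟩ := hsurj x
    obtain ⟨n, hn⟩ := exists_nat_ge ‖z‖
    refine Set.mem_iUnion.mpr ⟨n, ⟨z, ⟨hz, ?_⟩, hzx⟩⟩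
    rw [mem_closedBall_zero_iff]
    exact hn
  have huniv : μH[(4:ℝ)] (Set.univ : Set (Fin 4 → ℝ)) = 0 :=
    measure_mono_null hcover (measure_iUnion_null himg)
  rw [hh4] at huniv
  have : (volume (Set.univ : Set (Fin 4 → ℝ))) = ⊤ := by
    rw [MeasureTheory.volume_pi, Measure.pi_univ]
    simp [Real.volume_univ]
  rw [this] at huniv
  exact absurd huniv (by simp)


/-- the rational map sending a kernel vector to (a multiple of) its boundary point -/
def Fm (A : Fin 5 → Matrix (Fin 3) (Fin 3) ℝ) : (Fin 4 → ℝ) → (Fin 4 → ℝ) :=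
  fun z i => -(z 0) * qf (A i.succ) (fun j => z j.succ)

lemma contDiff_Fm (A : Fin 5 → Matrix (Fin 3) (Fin 3) ℝ) : ContDiff ℝ 1 (Fm A) := by
  rw [contDiff_pi]
  intro i
  have hcoord : ∀ k : Fin 4, ContDiff ℝ 1 fun z : Fin 4 → ℝ => z k :=
    fun k => contDiff_apply ℝ ℝ k
  show ContDiff ℝ 1 fun z : Fin 4 → ℝ =>
    -(z 0) * ∑ a, z a.succ * ∑ b, (A i.succ) a b * z b.succ
  exact ((hcoord 0).neg).mul (ContDiff.sum fun a _ => (hcoord a.succ).mul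
    (ContDiff.sum fun b _ => contDiff_const.mul (hcoord b.succ)))

lemma covers (A : Fin 5 → Matrix (Fin 3) (Fin 3) ℝ) (hA : ∀ k, (A k).IsSymm)
    (hrep : ∀ p : Fin 4 → ℝ, (∑ i, p i ^ 2 ≤ 1) ↔ (MA A p).PosSemidef)
    (hV : V A ≠ ⊤) (x : Fin 4 → ℝ) :
    ∃ z, ((z 1) ^ 2 + (z 2) ^ 2 + (z 3) ^ 2 = 1) ∧ Fm A z = x := by
  by_cases hx : x = 0
  · refine ⟨![0, 1, 0, 0], by simp, ?_⟩
    funext i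
    simp [Fm, hx]
  · have hx2 : 0 < ∑ i, x i ^ 2 := by
      rcases Function.ne_iff.mp hx with ⟨i, hi⟩
      exact Finset.sum_pos' (fun j _ => sq_nonneg _)
        ⟨i, Finset.mem_univ i, lt_of_le_of_ne (sq_nonneg _) (Ne.symm (pow_ne_zero 2 hi))⟩
    set n := Real.sqrt (∑ i, x i ^ 2) with hndef
    have hn : 0 < n := Real.sqrt_pos.mpr hx2
    set p : Fin 4 → ℝ := fun i => x i / n with hpdef
    have hp : ∑ i, p i ^ 2 = 1 := by
      simp only [hpdef, div_pow]
      rw [← Finset.sum_div, hndef, Real.sq_sqrt hx2.le]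
      exact div_self hx2.ne'
    obtain ⟨v, hker, hvV⟩ := exists_kernel_notin hA hrep hV hp
    have hv0 : v ≠ 0 := fun h => hvV (h ▸ (V A).zero_mem)
    have hν : 0 < ∑ j, v j ^ 2 := by
      rcases Function.ne_iff.mp hv0 with ⟨j, hj⟩
      exact Finset.sum_pos' (fun k _ => sq_nonneg _)
        ⟨j, Finset.mem_univ j, lt_of_le_of_ne (sq_nonneg _) (Ne.symm (pow_ne_zero 2 hj))⟩
    set sν := Real.sqrt (∑ j, v j ^ 2) with hsdef
    have hs : 0 < sν := Real.sqrt_pos.mpr hν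
    set v' : Fin 3 → ℝ := sν⁻¹ • v with hv'def
    have hker' : MA A p *ᵥ v' = 0 := by
      rw [hv'def, Matrix.mulVec_smul, hker, smul_zero]
    have hv'V : v' ∉ V A := by
      intro h
      apply hvV
      have : v = sν • v' := by
        rw [hv'def, smul_smul, mul_inv_cancel₀ hs.ne', one_smul]
      rw [this]
      exact (V A).smul_mem _ h
    obtain ⟨hc₀pos, hcceq⟩ := point_structure hrep hp hker' hv'V
    set c₀ := qf (A 0) v' with hc₀def
    refine ⟨![n / c₀, v' 0, v' 1, v' 2], ?_, ?_⟩
    · show (v' 0) ^ 2 + (v' 1) ^ 2 + (v' 2) ^ 2 = 1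
      have hcomp : ∀ j, v' j = sν⁻¹ * v j := fun j => rfl
      have hsum : v 0 ^ 2 + v 1 ^ 2 + v 2 ^ 2 = ∑ j, v j ^ 2 :=
        (Fin.sum_univ_three (fun j => v j ^ 2)).symm
      rw [hcomp 0, hcomp 1, hcomp 2]
      have hss : sν ^ 2 = ∑ j, v j ^ 2 := Real.sq_sqrt hν.le
      field_simp
      linarith [hsum, hss]
    · funext i
      have hvz : (fun j : Fin 3 => (![n / c₀, v' 0, v' 1, v' 2] : Fin 4 → ℝ) j.succ) = v' := by
        funext j
        fin_cases j <;> rfl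
      show -(![n / c₀, v' 0, v' 1, v' 2] 0) * qf (A i.succ)
        (fun j => ![n / c₀, v' 0, v' 1, v' 2] j.succ) = x i
      rw [hvz]
      have h0 : (![n / c₀, v' 0, v' 1, v' 2] : Fin 4 → ℝ) 0 = n / c₀ := rfl
      rw [h0, hcceq i]
      have : p i = x i / n := rfl
      rw [this]
      field_simp

theorem main_statement :
    ¬ ∃ A : Fin 5 → Matrix (Fin 3) (Fin 3) ℝ, (∀ k, (A k).IsSymm) ∧
      ∀ p : Fin 4 → ℝ,
        (∑ i, p i ^ 2 ≤ 1) ↔ (A 0 + ∑ i : Fin 4, p i • A i.succ).PosSemidef := by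
  rintro ⟨A, hA, hrep'⟩
  have hrep : ∀ p : Fin 4 → ℝ, (∑ i, p i ^ 2 ≤ 1) ↔ (MA A p).PosSemidef := fun p => hrep' p
  by_cases hV : V A = ⊤
  · set p : Fin 4 → ℝ := fun i => if i = 0 then 2 else 0 with hpdef
    have hpsd : (MA A p).PosSemidef := by
      refine Matrix.PosSemidef.of_dotProduct_mulVec_nonneg ?_ ?_
      · exact herm_of_symm (symm_MA hA p)
      · intro y
        have hy : y ∈ V A := by rw [hV]; trivial
        rw [MA_mulVec_V hy p]
        simp
    have hle := (hrep p).mpr hpsd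
    rw [Fin.sum_univ_four] at hle
    simp only [hpdef] at hle
    norm_num [show (1:Fin 4) ≠ 0 by decide, show (2:Fin 4) ≠ 0 by decide,
      show (3:Fin 4) ≠ 0 by decide] at hle
  · exact no_surj (Fm A) (contDiff_Fm A) (covers A hA hrep hV)

end

end Stmt9


/-- the unit ball in `ℝ⁴` has no spectrahedral representation by
`3×3` real symmetric matrices. -/
theorem stmt_9 :
    ¬ ∃ A : Fin 5 → Matrix (Fin 3) (Fin 3) ℝ, (∀ k, (A k).IsSymm) ∧
      ∀ p : Fin 4 → ℝ,
        (∑ i, p i ^ 2 ≤ 1) ↔ (A 0 + ∑ i : Fin 4, p i • A i.succ).PosSemidef := by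
  exact Stmt9.main_statement
end

section
/- Let A₁,…,Aₙ be real symmetric r×r matrices such that det(I_r + A₁x₁ + ⋯ + Aₙxₙ) is a polynomial of degree d. Then rank(A₁p₁ + ⋯ + Aₙpₙ) ≤ d for all p ∈ ℝⁿ. -/
open MvPolynomial

/-- Substituting degree-≤1 polynomials into a multivariate polynomial gives degree
at most the total degree. -/
lemma aux_natDegree_aeval_le {n : ℕ} (p : Fin n → ℝ) (P : MvPolynomial (Fin n) ℝ) :
    ((aeval fun i => Polynomial.C (p i) * Polynomial.X : MvPolynomial (Fin n) ℝ →ₐ[ℝ]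
      Polynomial ℝ) P).natDegree ≤ P.totalDegree := by
  conv_lhs => rw [P.as_sum, map_sum]
  apply Polynomial.natDegree_sum_le_of_forall_le
  intro m hm
  rw [aeval_monomial]
  refine le_trans (Polynomial.natDegree_mul_le) ?_
  have h1 : (algebraMap ℝ (Polynomial ℝ) (P.coeff m)).natDegree = 0 :=
    Polynomial.natDegree_C _
  rw [h1, zero_add]
  refine le_trans ?_ (MvPolynomial.le_totalDegree hm)
  refine le_trans (Polynomial.natDegree_prod_le _ _) ?_
  rw [Finsupp.sum]
  apply Finset.sum_le_sum
  intro i _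
  refine le_trans (Polynomial.natDegree_pow_le) ?_
  have : (Polynomial.C (p i) * Polynomial.X).natDegree ≤ 1 := by
    refine le_trans Polynomial.natDegree_mul_le ?_
    simp [Polynomial.natDegree_X_le]
  calc m i * (Polynomial.C (p i) * Polynomial.X).natDegree ≤ m i * 1 :=
        Nat.mul_le_mul_left _ this
    _ = m i := mul_one _

/-- The degree of `det (1 + X • M)` for a real symmetric `M` equals the rank of `M`. -/
lemma aux_natDegree_det_eq_rank {r : ℕ} (M : Matrix (Fin r) (Fin r) ℝ) (hM : M.IsHermitian) :
    ((1 + (Polynomial.X : Polynomial ℝ) • M.map Polynomial.C :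
        Matrix (Fin r) (Fin r) (Polynomial ℝ)).det).natDegree = M.rank := by
  classical
  set U : Matrix (Fin r) (Fin r) ℝ := ↑hM.eigenvectorUnitary with hU
  have hUU : U * star U = 1 := Matrix.mem_unitaryGroup_iff.mp hM.eigenvectorUnitary.2
  have hspec : M = U * Matrix.diagonal hM.eigenvalues * star U := by
    simpa using hM.spectral_theorem
  set φ : ℝ →+* Polynomial ℝ := Polynomial.C
  have key : (1 + (Polynomial.X : Polynomial ℝ) • M.map φ :
      Matrix (Fin r) (Fin r) (Polynomial ℝ)) =
      U.map φ * (1 + (Polynomial.X : Polynomial ℝ) • (Matrix.diagonal hM.eigenvalues).map φ) * (star U).map φ := by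
    rw [Matrix.mul_add, Matrix.add_mul]
    congr 1
    · rw [Matrix.mul_one, ← Matrix.map_mul, hUU, Matrix.map_one _ (map_zero φ) (map_one φ)]
    · rw [Matrix.mul_smul, Matrix.smul_mul, ← Matrix.map_mul, ← Matrix.map_mul, ← hspec]
  have hdetU : (U.map φ).det * ((star U).map φ).det = 1 := by
    rw [← Matrix.det_mul, ← Matrix.map_mul, hUU, Matrix.map_one _ (map_zero φ) (map_one φ),
      Matrix.det_one]
  have hdet : (1 + (Polynomial.X : Polynomial ℝ) • M.map φ :
      Matrix (Fin r) (Fin r) (Polynomial ℝ)).det =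
      (1 + (Polynomial.X : Polynomial ℝ) • (Matrix.diagonal hM.eigenvalues).map φ :
        Matrix (Fin r) (Fin r) (Polynomial ℝ)).det := by
    rw [key, Matrix.det_mul, Matrix.det_mul, mul_right_comm, hdetU, one_mul]
  have hdiag : (1 + (Polynomial.X : Polynomial ℝ) • (Matrix.diagonal hM.eigenvalues).map φ :
      Matrix (Fin r) (Fin r) (Polynomial ℝ)) =
      Matrix.diagonal (fun i => 1 + Polynomial.C (hM.eigenvalues i) * Polynomial.X) := by
    ext i j : 2
    by_cases h : i = j
    · subst h
      simp only [Matrix.add_apply, Matrix.smul_apply, Matrix.map_apply, Matrix.one_apply_eq,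
        Matrix.diagonal_apply_eq, smul_eq_mul, Function.comp_apply]
      simp only [φ]
      ring
    · simp only [Matrix.add_apply, Matrix.smul_apply, Matrix.map_apply,
        Matrix.one_apply_ne h, Matrix.diagonal_apply_ne _ h, smul_eq_mul, map_zero, mul_zero,
        add_zero]
  rw [hdet, hdiag, Matrix.det_diagonal]
  have hne : ∀ i ∈ (Finset.univ : Finset (Fin r)),
      (1 + Polynomial.C (hM.eigenvalues i) * Polynomial.X) ≠ 0 := by
    intro i _
    intro hc
    have := congrArg (Polynomial.eval 0) hc
    simp at this
  rw [Polynomial.natDegree_prod _ _ hne, hM.rank_eq_card_non_zero_eigs]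
  have hdeg : ∀ i : Fin r, (1 + Polynomial.C (hM.eigenvalues i) * Polynomial.X).natDegree
      = if hM.eigenvalues i ≠ 0 then 1 else 0 := by
    intro i
    by_cases h : hM.eigenvalues i = 0
    · simp [h]
    · rw [if_pos h]
      rw [add_comm, ← Polynomial.C_1, Polynomial.natDegree_add_C,
        Polynomial.natDegree_C_mul_X _ h]
  simp only [hdeg]
  rw [Finset.sum_ite, Finset.sum_const, Finset.sum_const]
  simp [Fintype.card_subtype]

/-- if `det(I + ∑ Aᵢxᵢ)` has degree `d`, then every real pencil
evaluation `∑ Aᵢpᵢ` has rank at most `d`. -/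
theorem stmt_10 (n r d : ℕ) (A : Fin n → Matrix (Fin r) (Fin r) ℝ)
    (hA : ∀ k, (A k).IsSymm)
    (hdeg : ((1 + ∑ i : Fin n, (X i : MvPolynomial (Fin n) ℝ) • (A i).map C
        : Matrix (Fin r) (Fin r) (MvPolynomial (Fin n) ℝ)).det).totalDegree = d) :
    ∀ p : Fin n → ℝ, (∑ i : Fin n, p i • A i).rank ≤ d := by
  intro p
  set M : Matrix (Fin r) (Fin r) ℝ := ∑ i : Fin n, p i • A i with hMdef
  have hMsymm : M.IsHermitian := by
    rw [Matrix.IsHermitian, Matrix.conjTranspose_eq_transpose_of_trivial]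
    rw [hMdef, Matrix.transpose_sum]
    refine Finset.sum_congr rfl fun i _ => ?_
    rw [Matrix.transpose_smul, hA i]
  set ψ : MvPolynomial (Fin n) ℝ →ₐ[ℝ] Polynomial ℝ :=
    aeval fun i => Polynomial.C (p i) * Polynomial.X with hψ
  -- map the matrix determinant
  have hmap : ψ ((1 + ∑ i : Fin n, (X i : MvPolynomial (Fin n) ℝ) • (A i).map C
        : Matrix (Fin r) (Fin r) (MvPolynomial (Fin n) ℝ)).det) =
      (1 + (Polynomial.X : Polynomial ℝ) • M.map Polynomial.C :
        Matrix (Fin r) (Fin r) (Polynomial ℝ)).det := by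
    rw [AlgHom.map_det ψ]
    congr 1
    apply Matrix.ext
    intro a b
    simp only [AlgHom.mapMatrix_apply, Matrix.map_apply, Matrix.add_apply, Matrix.smul_apply,
      Matrix.sum_apply, Matrix.one_apply, map_add, map_sum, apply_ite ψ, map_one, map_zero,
      smul_eq_mul, map_mul, hψ, aeval_X, hMdef, Finset.sum_apply, Pi.smul_apply]
    congr 1
    rw [Finset.mul_sum]
    refine Finset.sum_congr rfl fun i _ => ?_
    rw [aeval_C, Polynomial.algebraMap_eq]
    ring
  have h1 : (ψ ((1 + ∑ i : Fin n, (X i : MvPolynomial (Fin n) ℝ) • (A i).map C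
        : Matrix (Fin r) (Fin r) (MvPolynomial (Fin n) ℝ)).det)).natDegree ≤ d := by
    rw [← hdeg]
    exact aux_natDegree_aeval_le p _
  rw [hmap] at h1
  rw [← aux_natDegree_det_eq_rank M hMsymm]
  exact h1
end
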